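/- arXiv:1610.09651 — 6 statements merged into one kernel-verified Lean document; each statement's English description precedes it below -/
import Mathlib

section
/- Let T : ℝⁿ → ℝⁿ be a perfect-information finite Shapley operator and let M ≥ 0. Then for every policy σ of player Min and every g ∈ ℝⁿ, the perturbed reduced operator g + T^σ ∘ R_M has an eigenvalue: there exist λ ∈ ℝ and u ∈ ℝⁿ with g + T^σ(R_M(u)) = λe + u. (In other words, T ∘ R_M satisfies the ergodicity assumption: each of its one-player reduced operators remains solvable under every state-dependent perturbation.) -/
/-- Perfect-information finite Shapley operator. -/
noncomputable def shapleyOp {n : ℕ} (A : Fin n → Type) [∀ i, Fintype (A i)] [∀ i, Nonempty (A i)]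
    (B : ∀ i, A i → Type) [∀ i a, Fintype (B i a)] [∀ i a, Nonempty (B i a)]
    (r : ∀ i, ∀ a : A i, B i a → ℝ) (P : ∀ i, ∀ a : A i, B i a → Fin n → ℝ) :
    (Fin n → ℝ) → (Fin n → ℝ) :=
  fun x i => ⨅ a : A i, ⨆ b : B i a, (r i a b + ∑ j, P i a b j * x j)

/-- Reduced Shapley operator `T^σ` obtained by fixing a policy `σ` of player Min. -/
noncomputable def reducedOp {n : ℕ} (A : Fin n → Type)
    (B : ∀ i, A i → Type) [∀ i a, Fintype (B i a)] [∀ i a, Nonempty (B i a)]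
    (r : ∀ i, ∀ a : A i, B i a → ℝ) (P : ∀ i, ∀ a : A i, B i a → Fin n → ℝ)
    (σ : ∀ i, A i) : (Fin n → ℝ) → (Fin n → ℝ) :=
  fun x i => ⨆ b : B i (σ i), (r i (σ i) b + ∑ j, P i (σ i) b j * x j)

/-- The map `R_M`, `(R_M x)_i = max( x_i, max_j (−M + x_j) )`. -/
noncomputable def RM {n : ℕ} (M : ℝ) (x : Fin n → ℝ) : Fin n → ℝ :=
  fun i => max (x i) (⨆ j, (-M + x j))

open Filter Topology


section helpers
set_option linter.unusedSectionVars false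
variable {ι : Type*} [Fintype ι] [Nonempty ι]

lemma fsup_exists (h : ι → ℝ) : ∃ b, (⨆ x, h x) = h b ∧ ∀ x, h x ≤ h b := by
  obtain ⟨b, hb⟩ := Finite.exists_max h
  exact ⟨b, le_antisymm (ciSup_le hb) (le_ciSup (Set.finite_range h).bddAbove b), hb⟩

lemma le_fsup (h : ι → ℝ) (b : ι) : h b ≤ ⨆ x, h x :=
  le_ciSup (Set.finite_range h).bddAbove b

lemma fsup_add (h : ι → ℝ) (c : ℝ) : (⨆ b, (h b + c)) = (⨆ b, h b) + c := by
  obtain ⟨b, hb, hmax⟩ := fsup_exists h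
  refine le_antisymm (ciSup_le fun x => by have := hmax x; linarith [hb]) ?_
  rw [hb]
  exact le_fsup (fun b => h b + c) b

lemma fsup_diff_le {h h' : ι → ℝ} {C : ℝ} (H : ∀ b, |h b - h' b| ≤ C) :
    |(⨆ b, h b) - (⨆ b, h' b)| ≤ C := by
  have h1 : (⨆ b, h b) ≤ (⨆ b, h' b) + C := by
    refine ciSup_le fun b => ?_
    have h3 := (abs_le.1 (H b)).2
    have h4 := le_fsup h' b
    linarith
  have h2 : (⨆ b, h' b) ≤ (⨆ b, h b) + C := by
    refine ciSup_le fun b => ?_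
    have h3 := (abs_le.1 (H b)).1
    have h4 := le_fsup h b
    linarith
  exact abs_le.2 ⟨by linarith, by linarith⟩

lemma fsup_tendsto {h : ℕ → ι → ℝ} {L : ι → ℝ}
    (H : ∀ b, Tendsto (fun k => h k b) atTop (𝓝 (L b))) :
    Tendsto (fun k => ⨆ b, h k b) atTop (𝓝 (⨆ b, L b)) := by
  rw [Metric.tendsto_nhds]
  intro ε hε
  have hev : ∀ᶠ k in atTop, ∀ b : ι, dist (h k b) (L b) < ε / 2 :=
    eventually_all.2 fun b => (Metric.tendsto_nhds.1 (H b)) (ε/2) (by linarith)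
  refine hev.mono fun k hk => ?_
  have : |(⨆ b, h k b) - (⨆ b, L b)| ≤ ε / 2 :=
    fsup_diff_le fun b => le_of_lt (by rw [← Real.dist_eq]; exact hk b)
  rw [Real.dist_eq]
  linarith [this]

end helpers
section aux
variable {n : ℕ} (hn : 0 < n)
variable (BB : Fin n → Type) [∀ i, Fintype (BB i)] [∀ i, Nonempty (BB i)]
variable (rr : ∀ i, BB i → ℝ) (PP : ∀ i, BB i → Fin n → ℝ)
variable (hPP : ∀ i b, (∀ j, 0 ≤ PP i b j) ∧ ∑ j, PP i b j = 1)
variable (g : Fin n → ℝ) (M : ℝ) (hM : 0 ≤ M)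

include hn in
/-- `R_M` is nonexpansive coordinatewise. -/
lemma RM_nonexp (x y : Fin n → ℝ) (j : Fin n) :
    |RM M x j - RM M y j| ≤ dist x y := by
  have : Nonempty (Fin n) := ⟨⟨0, hn⟩⟩
  unfold RM
  refine le_trans (abs_max_sub_max_le_max _ _ _ _) (max_le ?_ ?_)
  · rw [← Real.dist_eq]; exact dist_le_pi_dist x y j
  · refine fsup_diff_le fun k => ?_
    have : -M + x k - (-M + y k) = x k - y k := by ring
    rw [this, ← Real.dist_eq]; exact dist_le_pi_dist x y k

include hn hPP in
/-- Existence of a fixed point of the discounted operator. -/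
lemma aux1 (α : ℝ) (h0 : 0 ≤ α) (h1 : α < 1) :
    ∃ x : Fin n → ℝ, ∀ i,
      x i = g i + ⨆ b : BB i, (rr i b + α * ∑ j, PP i b j * RM M x j) := by
  have : Nonempty (Fin n) := ⟨⟨0, hn⟩⟩
  set f : (Fin n → ℝ) → (Fin n → ℝ) :=
    fun x i => g i + ⨆ b : BB i, (rr i b + α * ∑ j, PP i b j * RM M x j) with hf
  have hlip : ∀ x y, dist (f x) (f y) ≤ α * dist x y := by
    intro x y
    rw [dist_pi_le_iff (by positivity)]
    intro i
    rw [Real.dist_eq, hf]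
    simp only [add_sub_add_left_eq_sub]
    refine fsup_diff_le fun b => ?_
    have heq : rr i b + α * ∑ j, PP i b j * RM M x j -
        (rr i b + α * ∑ j, PP i b j * RM M y j)
        = α * ∑ j, PP i b j * (RM M x j - RM M y j) := by
      rw [Finset.mul_sum, Finset.mul_sum, Finset.mul_sum, add_sub_add_left_eq_sub,
        ← Finset.sum_sub_distrib]
      exact Finset.sum_congr rfl fun j _ => by ring
    rw [heq, abs_mul, abs_of_nonneg h0]
    refine mul_le_mul_of_nonneg_left ?_ h0
    calc |∑ j, PP i b j * (RM M x j - RM M y j)|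
        ≤ ∑ j, |PP i b j * (RM M x j - RM M y j)| := Finset.abs_sum_le_sum_abs _ _
      _ ≤ ∑ j, PP i b j * dist x y := by
          refine Finset.sum_le_sum fun j _ => ?_
          rw [abs_mul, abs_of_nonneg ((hPP i b).1 j)]
          exact mul_le_mul_of_nonneg_left (RM_nonexp hn M x y j) ((hPP i b).1 j)
      _ = dist x y := by rw [← Finset.sum_mul, (hPP i b).2, one_mul]
  have hK : ContractingWith ⟨α, h0⟩ f :=
    ⟨by exact_mod_cast h1, LipschitzWith.of_dist_le_mul hlip⟩
  refine ⟨hK.fixedPoint f, fun i => ?_⟩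
  have := hK.fixedPoint_isFixedPt
  exact (congrFun this i).symm
end aux
section aux2
variable {n : ℕ} (hn : 0 < n)
variable (BB : Fin n → Type) [∀ i, Fintype (BB i)] [∀ i, Nonempty (BB i)]
variable (rr : ∀ i, BB i → ℝ) (PP : ∀ i, BB i → Fin n → ℝ)
variable (hPP : ∀ i b, (∀ j, 0 ≤ PP i b j) ∧ ∑ j, PP i b j = 1)
variable (g : Fin n → ℝ) (M : ℝ) (hM : 0 ≤ M)

/-- Discounted operator on the compact set `[0,M]ⁿ`. -/
noncomputable def Fop (α : ℝ) (v : Fin n → ℝ) : Fin n → ℝ :=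
  fun i => g i + ⨆ b : BB i, (rr i b + α * ∑ j, PP i b j * v j)

include hn hPP hM in
lemma aux2 (α : ℝ) (h0 : 0 ≤ α) (h1 : α < 1) :
    ∃ v : Fin n → ℝ, (∀ j, 0 ≤ v j) ∧ (∀ j, v j ≤ M) ∧
      ∀ j, v j = max (Fop BB rr PP g α v j - (⨆ i, Fop BB rr PP g α v i) + M) 0 := by
  have : Nonempty (Fin n) := ⟨⟨0, hn⟩⟩
  obtain ⟨x, hx⟩ := aux1 hn BB rr PP hPP g M α h0 h1
  set t := ⨆ j, x j with ht
  have hxt : ∀ j, x j ≤ t := le_fsup x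
  set v : Fin n → ℝ := fun j => max (x j - (t - M)) 0 with hv
  have hsup : (⨆ k, -M + x k) = t - M := by
    have h2 : (⨆ k, -M + x k) = ⨆ k, (x k + (-M)) := by
      congr 1; funext k; ring
    rw [h2, fsup_add, ← ht]; ring
  have hRM : ∀ j, RM M x j = (t - M) + v j := by
    intro j
    show max (x j) (⨆ k, -M + x k) = t - M + max (x j - (t - M)) 0
    rw [hsup]
    rcases le_total (x j) (t - M) with h | h
    · rw [max_eq_right h, max_eq_right (by linarith), add_zero]
    · rw [max_eq_left h, max_eq_left (by linarith)]; ring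
  have hsum : ∀ i (b : BB i),
      ∑ j, PP i b j * RM M x j = (∑ j, PP i b j * v j) + (t - M) := by
    intro i b
    calc ∑ j, PP i b j * RM M x j
        = ∑ j, (PP i b j * v j + PP i b j * (t - M)) := by
          refine Finset.sum_congr rfl fun j _ => ?_; rw [hRM j]; ring
      _ = (∑ j, PP i b j * v j) + (∑ j, PP i b j) * (t - M) := by
          rw [Finset.sum_add_distrib, Finset.sum_mul]
      _ = (∑ j, PP i b j * v j) + (t - M) := by rw [(hPP i b).2, one_mul]
  have hxF : ∀ i, x i = Fop BB rr PP g α v i + α * (t - M) := by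
    intro i
    rw [hx i, Fop]
    have h3 : (⨆ b : BB i, (rr i b + α * ∑ j, PP i b j * RM M x j))
        = ⨆ b : BB i, ((rr i b + α * ∑ j, PP i b j * v j) + α * (t - M)) := by
      congr 1; funext b; rw [hsum i b]; ring
    rw [h3, fsup_add]; ring
  have h4 : (⨆ j, x j) = ⨆ j, (Fop BB rr PP g α v j + α * (t - M)) := by
    congr 1; funext j; exact hxF j
  have htF : t = (⨆ i, Fop BB rr PP g α v i) + α * (t - M) :=
    ht.trans (h4.trans (fsup_add _ _))
  refine ⟨v, fun j => le_max_right _ _, fun j => max_le (by linarith [hxt j]) hM, fun j => ?_⟩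
  have h5 : x j - (t - M) = Fop BB rr PP g α v j - (⨆ i, Fop BB rr PP g α v i) + M := by
    rw [hxF j]; linarith [htF]
  have h6 : v j = max (x j - (t - M)) 0 := rfl
  rw [h6, h5]
end aux2
section aux3
variable {n : ℕ} (hn : 0 < n)
variable (BB : Fin n → Type) [∀ i, Fintype (BB i)] [∀ i, Nonempty (BB i)]
variable (rr : ∀ i, BB i → ℝ) (PP : ∀ i, BB i → Fin n → ℝ)
variable (hPP : ∀ i b, (∀ j, 0 ≤ PP i b j) ∧ ∑ j, PP i b j = 1)
variable (g : Fin n → ℝ) (M : ℝ) (hM : 0 ≤ M)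

include hn hPP hM in
lemma aux3 : ∃ v : Fin n → ℝ, (∀ j, 0 ≤ v j) ∧ (∀ j, v j ≤ M) ∧
    ∀ j, v j = max (Fop BB rr PP g 1 v j - (⨆ i, Fop BB rr PP g 1 v i) + M) 0 := by
  have : Nonempty (Fin n) := ⟨⟨0, hn⟩⟩
  set α : ℕ → ℝ := fun k => 1 - 1/(k+1) with hα
  have hα0 : ∀ k, 0 ≤ α k := by
    intro k
    have h1 : (1:ℝ)/(k+1) ≤ 1 := by
      rw [div_le_one (by positivity)]
      linarith [Nat.cast_nonneg (α := ℝ) k]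
    simp only [hα]; linarith
  have hα1 : ∀ k, α k < 1 := by
    intro k
    have h1 : (0:ℝ) < 1/(k+1) := by positivity
    simp only [hα]; linarith
  have hαlim : Filter.Tendsto α Filter.atTop (nhds 1) := by
    have := (tendsto_one_div_add_atTop_nhds_zero_nat :
      Tendsto (fun n : ℕ => 1 / ((n : ℝ) + 1)) atTop (𝓝 0))
    have h2 := Filter.Tendsto.const_sub (1:ℝ) this
    simp only [sub_zero] at h2
    simp only [hα, one_div]
    convert h2 using 2 with k
    rw [one_div]
  choose w hw0 hwM hweq using fun k => aux2 hn BB rr PP hPP g M hM (α k) (hα0 k) (hα1 k)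
  have hmem : ∀ k, w k ∈ Set.Icc (0 : Fin n → ℝ) (fun _ => M) := by
    intro k
    exact Set.mem_Icc.2 ⟨fun j => hw0 k j, fun j => hwM k j⟩
  obtain ⟨v, hv, φ, hφ, hconv⟩ := isCompact_Icc.tendsto_subseq hmem
  have hcj : ∀ j, Filter.Tendsto (fun l => w (φ l) j) Filter.atTop (nhds (v j)) :=
    fun j => tendsto_pi_nhds.1 hconv j
  have hαφ : Filter.Tendsto (fun l => α (φ l)) Filter.atTop (nhds 1) :=
    hαlim.comp hφ.tendsto_atTop
  have hFi : ∀ i, Filter.Tendsto (fun l => Fop BB rr PP g (α (φ l)) (w (φ l)) i)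
      Filter.atTop (nhds (Fop BB rr PP g 1 v i)) := by
    intro i
    simp only [Fop]
    refine Filter.Tendsto.const_add _ (fsup_tendsto fun b => ?_)
    exact Filter.Tendsto.const_add _ (hαφ.mul
      (tendsto_finset_sum _ fun j _ => (Filter.Tendsto.const_mul _ (hcj j))))
  have hFsup : Filter.Tendsto (fun l => ⨆ i, Fop BB rr PP g (α (φ l)) (w (φ l)) i)
      Filter.atTop (nhds (⨆ i, Fop BB rr PP g 1 v i)) := fsup_tendsto hFi
  refine ⟨v, fun j => hv.1 j, fun j => hv.2 j, fun j => ?_⟩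
  refine tendsto_nhds_unique (hcj j) ?_
  have heq : (fun l => w (φ l) j) = fun l =>
      max (Fop BB rr PP g (α (φ l)) (w (φ l)) j
        - (⨆ i, Fop BB rr PP g (α (φ l)) (w (φ l)) i) + M) 0 := by
    funext l; exact hweq (φ l) j
  rw [heq]
  exact (((hFi j).sub hFsup).add tendsto_const_nhds).max tendsto_const_nhds
end aux3
section aux4
variable {n : ℕ} (hn : 0 < n)
variable (BB : Fin n → Type) [∀ i, Fintype (BB i)] [∀ i, Nonempty (BB i)]
variable (rr : ∀ i, BB i → ℝ) (PP : ∀ i, BB i → Fin n → ℝ)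
variable (hPP : ∀ i b, (∀ j, 0 ≤ PP i b j) ∧ ∑ j, PP i b j = 1)
variable (g : Fin n → ℝ) (M : ℝ) (hM : 0 ≤ M)

include hn hPP hM in
lemma aux4 : ∃ (lam : ℝ) (u : Fin n → ℝ), ∀ i,
    g i + (⨆ b : BB i, (rr i b + ∑ j, PP i b j * RM M u j)) = lam + u i := by
  have : Nonempty (Fin n) := ⟨⟨0, hn⟩⟩
  obtain ⟨v, hv0, hvM, hveq⟩ := aux3 hn BB rr PP hPP g M hM
  set u : Fin n → ℝ := Fop BB rr PP g 1 v with hu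
  set t := ⨆ i, u i with ht
  refine ⟨t - M, u, fun i => ?_⟩
  have hsupu : (⨆ k, -M + u k) = t - M := by
    have h2 : (⨆ k, -M + u k) = ⨆ k, (u k + (-M)) := by
      congr 1; funext k; ring
    rw [h2, fsup_add, ← ht]; ring
  have hRM : ∀ j, RM M u j = (t - M) + v j := by
    intro j
    show max (u j) (⨆ k, -M + u k) = t - M + v j
    rw [hsupu]
    have hut : u j ≤ t := ht ▸ le_fsup u j
    rcases le_total (u j) (t - M) with h | h
    · rw [max_eq_right h, hveq j, max_eq_right (by linarith), add_zero]
    · rw [max_eq_left h, hveq j, max_eq_left (by linarith)]; ring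
  have hsum : ∀ b : BB i,
      ∑ j, PP i b j * RM M u j = (∑ j, PP i b j * v j) + (t - M) := by
    intro b
    calc ∑ j, PP i b j * RM M u j
        = ∑ j, (PP i b j * v j + PP i b j * (t - M)) := by
          refine Finset.sum_congr rfl fun j _ => ?_; rw [hRM j]; ring
      _ = (∑ j, PP i b j * v j) + (∑ j, PP i b j) * (t - M) := by
          rw [Finset.sum_add_distrib, Finset.sum_mul]
      _ = (∑ j, PP i b j * v j) + (t - M) := by rw [(hPP i b).2, one_mul]
  have h3 : (⨆ b : BB i, (rr i b + ∑ j, PP i b j * RM M u j))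
      = ⨆ b : BB i, ((rr i b + 1 * ∑ j, PP i b j * v j) + (t - M)) := by
    congr 1; funext b; rw [hsum b]; ring
  have huX : u i = g i + ⨆ b : BB i, (rr i b + 1 * ∑ j, PP i b j * v j) := by
    rw [hu]; rfl
  rw [h3, fsup_add]
  linarith [huX]
end aux4
/-- `T ∘ R_M` satisfies the ergodicity assumption: for every policy `σ` of
player Min and every perturbation `g`, `g + T^σ ∘ R_M` has an eigenvalue. -/
theorem stmt10 {n : ℕ} (hn : 0 < n)
    (A : Fin n → Type) [∀ i, Fintype (A i)] [∀ i, Nonempty (A i)]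
    (B : ∀ i, A i → Type) [∀ i a, Fintype (B i a)] [∀ i a, Nonempty (B i a)]
    (r : ∀ i, ∀ a : A i, B i a → ℝ) (P : ∀ i, ∀ a : A i, B i a → Fin n → ℝ)
    (hP : ∀ i a b, (∀ j, 0 ≤ P i a b j) ∧ ∑ j, P i a b j = 1)
    (T : (Fin n → ℝ) → (Fin n → ℝ)) (hT : T = shapleyOp A B r P)
    (M : ℝ) (hM : 0 ≤ M) :
    ∀ (σ : ∀ i, A i) (g : Fin n → ℝ),
      ∃ (lam : ℝ) (u : Fin n → ℝ),
        g + reducedOp A B r P σ (RM M u) = (fun _ => lam) + u := by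
  intro σ g
  obtain ⟨lam, u, h⟩ := aux4 hn (fun i => B i (σ i)) (fun i b => r i (σ i) b)
    (fun i b => P i (σ i) b) (fun i b => hP i (σ i) b) g M hM
  refine ⟨lam, u, funext fun i => ?_⟩
  simpa [reducedOp, Pi.add_apply] using h i
end

section
/- Let T : ℝⁿ → ℝⁿ be a perfect-information finite Shapley operator and suppose u, ν ∈ ℝⁿ satisfy T(u + αν) = u + (α+1)ν for all α ≥ 0. Then for every M > ‖u‖_H (the Hilbert seminorm of u), the eigenvalue of T ∘ R_M equals the upper mean payoff of T: whenever T(R_M(w)) = λe + w for some w ∈ ℝⁿ and λ ∈ ℝ, one has λ = max_{1≤i≤n} ν_i; moreover such a pair (λ, w) exists. -/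
open Filter Topology

lemma fin_ciSup_add {ι : Sort*} [Nonempty ι] [Finite ι] (f : ι → ℝ) (c : ℝ) :
    (⨆ i, (f i + c)) = (⨆ i, f i) + c := by
  apply le_antisymm
  · exact ciSup_le fun i =>
      add_le_add_left (le_ciSup (Set.Finite.bddAbove (Set.finite_range f)) i) c
  · have h : ∀ i, f i ≤ (⨆ j, (f j + c)) - c := fun i => by
      have := le_ciSup (Set.Finite.bddAbove (Set.finite_range fun j => f j + c)) i
      linarith
    have := ciSup_le h
    linarith

lemma fin_ciInf_add {ι : Sort*} [Nonempty ι] [Finite ι] (f : ι → ℝ) (c : ℝ) :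
    (⨅ i, (f i + c)) = (⨅ i, f i) + c := by
  apply le_antisymm
  · have h : ∀ i, (⨅ j, (f j + c)) - c ≤ f i := fun i => by
      have := ciInf_le (Set.Finite.bddBelow (Set.finite_range fun j => f j + c)) i
      linarith
    have := le_ciInf h
    linarith
  · exact le_ciInf fun i =>
      add_le_add_left (ciInf_le (Set.Finite.bddBelow (Set.finite_range f)) i) c

lemma natmul_nonpos {s C : ℝ} (h : ∀ k : ℕ, (k : ℝ) * s ≤ C) : s ≤ 0 := by
  by_contra hs
  push_neg at hs
  obtain ⟨k, hk⟩ := exists_nat_gt (C / s)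
  have h2 : C < (k : ℝ) * s := by rwa [div_lt_iff₀ hs] at hk
  exact absurd (h k) (not_le.mpr h2)

section shapleyAux
variable {n : ℕ} (A : Fin n → Type) [∀ i, Fintype (A i)] [∀ i, Nonempty (A i)]
    (B : ∀ i, A i → Type) [∀ i a, Fintype (B i a)] [∀ i a, Nonempty (B i a)]
    (r : ∀ i, ∀ a : A i, B i a → ℝ) (P : ∀ i, ∀ a : A i, B i a → Fin n → ℝ)
    (hP : ∀ i a b, (∀ j, 0 ≤ P i a b j) ∧ ∑ j, P i a b j = 1)

include hP in
lemma shapley_mono : Monotone (shapleyOp A B r P) := by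
  intro x y hxy i
  refine ciInf_mono (Set.Finite.bddBelow (Set.finite_range _)) fun a => ?_
  refine ciSup_mono (Set.Finite.bddAbove (Set.finite_range _)) fun b => ?_
  have : ∑ j, P i a b j * x j ≤ ∑ j, P i a b j * y j :=
    Finset.sum_le_sum fun j _ => mul_le_mul_of_nonneg_left (hxy j) ((hP i a b).1 j)
  linarith

include hP in
lemma shapley_addc (x : Fin n → ℝ) (c : ℝ) :
    shapleyOp A B r P (fun j => x j + c) = fun i => shapleyOp A B r P x i + c := by
  funext i
  simp only [shapleyOp]
  have hterm : ∀ (a : A i) (b : B i a),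
      r i a b + ∑ j, P i a b j * (x j + c) = (r i a b + ∑ j, P i a b j * x j) + c := by
    intro a b
    have h1 : ∑ j, P i a b j * (x j + c) = (∑ j, P i a b j * x j) + (∑ j, P i a b j) * c := by
      rw [Finset.sum_mul, ← Finset.sum_add_distrib]
      exact Finset.sum_congr rfl fun j _ => by ring
    rw [h1, (hP i a b).2]; ring
  calc (⨅ a : A i, ⨆ b : B i a, (r i a b + ∑ j, P i a b j * (x j + c)))
      = ⨅ a : A i, ((⨆ b : B i a, (r i a b + ∑ j, P i a b j * x j)) + c) := by
        refine iInf_congr fun a => ?_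
        rw [← fin_ciSup_add]
        exact iSup_congr fun b => hterm a b
    _ = (⨅ a : A i, ⨆ b : B i a, (r i a b + ∑ j, P i a b j * x j)) + c :=
        fin_ciInf_add _ c
end shapleyAux

section rmAux
variable {n : ℕ} [Nonempty (Fin n)] (M : ℝ)

omit [Nonempty (Fin n)] in
lemma RM_mono : Monotone (RM (n := n) M) := fun x y hxy i =>
  max_le_max (hxy i) (ciSup_mono (Set.Finite.bddAbove (Set.finite_range _))
    fun j => by linarith [hxy j])

omit [Nonempty (Fin n)] in
lemma le_RM (x : Fin n → ℝ) : x ≤ RM M x := fun i => le_max_left _ _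

lemma RM_addc (x : Fin n → ℝ) (c : ℝ) :
    RM M (fun j => x j + c) = fun i => RM M x i + c := by
  funext i
  simp only [RM]
  have h : (⨆ j, (-M + (x j + c))) = (⨆ j, (-M + x j)) + c := by
    rw [← fin_ciSup_add]
    exact iSup_congr fun j => by ring
  rw [h, max_add_add_right]
end rmAux

section abstract
variable {n : ℕ} [Nonempty (Fin n)] (g : (Fin n → ℝ) → (Fin n → ℝ))
variable (hmono : Monotone g)
variable (haddc : ∀ (z : Fin n → ℝ) (c : ℝ), g (fun j => z j + c) = fun i => g z i + c)

include hmono haddc in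
lemma eig_le (u w : Fin n → ℝ) (lam lb : ℝ)
    (hgw : g w = fun i => lam + w i) (hgu : ∀ i, g u i ≤ lb + u i) : lam ≤ lb := by
  set c := dist w u with hc
  have hwu : ∀ i, w i ≤ u i + c := fun i => by
    have h := dist_le_pi_dist w u i
    rw [Real.dist_eq] at h
    linarith [(abs_le.mp h).2]
  have hPex : ∀ k : ℕ, g^[k] w = fun i => (k : ℝ) * lam + w i := by
    intro k; induction k with
    | zero => funext i; simp
    | succ k ih =>
      rw [Function.iterate_succ_apply', ih]
      have e1 : (fun i => (k : ℝ) * lam + w i) = fun j => w j + (k : ℝ) * lam := by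
        funext j; ring
      rw [e1, haddc]
      funext i
      have h2 := congrFun hgw i
      push_cast
      simp only [h2]
      ring
  have hQup : ∀ k : ℕ, ∀ i, g^[k] u i ≤ (k : ℝ) * lb + u i := by
    intro k; induction k with
    | zero => intro i; simp
    | succ k ih =>
      intro i
      rw [Function.iterate_succ_apply']
      have h1 : g^[k] u ≤ fun j => u j + (k : ℝ) * lb := fun j => by
        have := ih j; show g^[k] u j ≤ u j + (k : ℝ) * lb; linarith
      have h2 := hmono h1 i
      have h3 := congrFun (haddc u ((k : ℝ) * lb)) i
      have h4 := hgu i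
      push_cast
      simp only [h3] at h2
      linarith
  have hPle : ∀ k : ℕ, ∀ i, g^[k] w i ≤ g^[k] u i + c := by
    intro k; induction k with
    | zero => exact hwu
    | succ k ih =>
      intro i
      rw [Function.iterate_succ_apply', Function.iterate_succ_apply']
      have h1 : g^[k] w ≤ fun j => g^[k] u j + c := ih
      have h2 := hmono h1 i
      have h3 := congrFun (haddc (g^[k] u) c) i
      simp only [h3] at h2
      exact h2
  set i₀ : Fin n := Classical.arbitrary (Fin n)
  have key : ∀ k : ℕ, (k : ℝ) * (lam - lb) ≤ u i₀ + c - w i₀ := by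
    intro k
    have h1 := congrFun (hPex k) i₀
    have h2 := hPle k i₀
    have h3 := hQup k i₀
    rw [h1] at h2
    nlinarith
  have := natmul_nonpos key
  linarith

include hmono haddc in
lemma eig_ge (x w : Fin n → ℝ) (lam lb : ℝ)
    (hgw : g w = fun i => lam + w i) (hgx : ∀ i, lb + x i ≤ g x i) : lb ≤ lam := by
  set c := dist x w with hc
  have hxw : ∀ i, x i ≤ w i + c := fun i => by
    have h := dist_le_pi_dist x w i
    rw [Real.dist_eq] at h
    linarith [(abs_le.mp h).2]
  have hPex : ∀ k : ℕ, g^[k] w = fun i => (k : ℝ) * lam + w i := by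
    intro k; induction k with
    | zero => funext i; simp
    | succ k ih =>
      rw [Function.iterate_succ_apply', ih]
      have e1 : (fun i => (k : ℝ) * lam + w i) = fun j => w j + (k : ℝ) * lam := by
        funext j; ring
      rw [e1, haddc]
      funext i
      have h2 := congrFun hgw i
      push_cast
      simp only [h2]
      ring
  have hQlow : ∀ k : ℕ, ∀ i, (k : ℝ) * lb + x i ≤ g^[k] x i := by
    intro k; induction k with
    | zero => intro i; simp
    | succ k ih =>
      intro i
      rw [Function.iterate_succ_apply']
      have h1 : (fun j => x j + (k : ℝ) * lb) ≤ g^[k] x := fun j => by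
        have := ih j; show x j + (k : ℝ) * lb ≤ g^[k] x j; linarith
      have h2 := hmono h1 i
      have h3 := congrFun (haddc x ((k : ℝ) * lb)) i
      have h4 := hgx i
      push_cast
      simp only [h3] at h2
      linarith
  have hPle : ∀ k : ℕ, ∀ i, g^[k] x i ≤ g^[k] w i + c := by
    intro k; induction k with
    | zero => exact hxw
    | succ k ih =>
      intro i
      rw [Function.iterate_succ_apply', Function.iterate_succ_apply']
      have h1 : g^[k] x ≤ fun j => g^[k] w j + c := ih
      have h2 := hmono h1 i
      have h3 := congrFun (haddc (g^[k] w) c) i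
      simp only [h3] at h2
      exact h2
  set i₀ : Fin n := Classical.arbitrary (Fin n)
  have key : ∀ k : ℕ, (k : ℝ) * (lb - lam) ≤ w i₀ + c - x i₀ := by
    intro k
    have h1 := congrFun (hPex k) i₀
    have h2 := hPle k i₀
    have h3 := hQlow k i₀
    rw [h1] at h2
    nlinarith
  have := natmul_nonpos key
  linarith

include hmono haddc in
lemma exist_eig (x u : Fin n → ℝ) (lb : ℝ) (hxu : x ≤ u)
    (hgx : ∀ i, lb + x i ≤ g x i) (hgu : ∀ i, g u i ≤ lb + u i) :
    ∃ w : Fin n → ℝ, g w = fun i => lb + w i := by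
  have hgLip : ∀ a b : Fin n → ℝ, dist (g a) (g b) ≤ dist a b := by
    have hle : ∀ a b : Fin n → ℝ, ∀ i, g a i ≤ g b i + dist a b := by
      intro a b i
      have h1 : a ≤ fun j => b j + dist a b := fun j => by
        have h := dist_le_pi_dist a b j
        rw [Real.dist_eq] at h
        show a j ≤ b j + dist a b
        linarith [(abs_le.mp h).2]
      have h2 := hmono h1 i
      have h3 := congrFun (haddc b (dist a b)) i
      simp only [h3] at h2
      exact h2
    intro a b
    rw [dist_pi_le_iff dist_nonneg]
    intro i
    rw [Real.dist_eq, abs_le]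
    constructor
    · have := hle b a i; rw [dist_comm] at this; linarith
    · have := hle a b i; linarith
  have hgcont : Continuous g := by
    have : LipschitzWith 1 g := LipschitzWith.of_dist_le_mul (by
      intro a b; simpa using hgLip a b)
    exact this.continuous
  set h : (Fin n → ℝ) → (Fin n → ℝ) := fun z i => g z i - lb with hhdef
  have hhm : Monotone h := fun a b hab i => by
    have := hmono hab i
    simp only [hhdef]
    linarith
  have hhcont : Continuous h := by
    rw [hhdef]
    exact continuous_pi fun i => ((continuous_apply i).comp hgcont).sub continuous_const
  set seq : ℕ → Fin n → ℝ := fun k => h^[k] x with hseqdef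
  have hseq_succ : ∀ k, seq (k + 1) = h (seq k) := fun k =>
    Function.iterate_succ_apply' h k x
  have hxhx : x ≤ h x := fun i => by
    have := hgx i
    simp only [hhdef]
    linarith
  have hhu : h u ≤ u := fun i => by
    have := hgu i
    simp only [hhdef]
    linarith
  have hle_u : ∀ k, seq k ≤ u := by
    intro k; induction k with
    | zero => exact hxu
    | succ k ih =>
      rw [hseq_succ]
      exact le_trans (hhm ih) hhu
  have hmono_k : ∀ k, seq k ≤ seq (k + 1) := by
    intro k; induction k with
    | zero =>
      rw [hseq_succ]
      exact hxhx
    | succ k ih =>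
      rw [hseq_succ, hseq_succ]
      exact hhm ih
  have hmono' : ∀ i, Monotone fun k => seq k i := fun i =>
    monotone_nat_of_le_succ fun k => hmono_k k i
  set w : Fin n → ℝ := fun i => ⨆ k, seq k i with hwdef
  have hbdd : ∀ i, BddAbove (Set.range fun k => seq k i) := fun i =>
    ⟨u i, by rintro t ⟨k, rfl⟩; exact hle_u k i⟩
  have htend : Tendsto seq atTop (𝓝 w) :=
    tendsto_pi_nhds.mpr fun i => tendsto_atTop_ciSup (hmono' i) (hbdd i)
  have htend2 : Tendsto (fun k => h (seq k)) atTop (𝓝 (h w)) :=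
    (hhcont.tendsto w).comp htend
  have htend3 : Tendsto (fun k => h (seq k)) atTop (𝓝 w) := by
    have e : (fun k => h (seq k)) = fun k => seq (k + 1) :=
      funext fun k => (hseq_succ k).symm
    rw [e]
    exact htend.comp (tendsto_add_atTop_nat 1)
  have hfix : h w = w := tendsto_nhds_unique htend2 htend3
  refine ⟨w, funext fun i => ?_⟩
  have := congrFun hfix i
  simp only [hhdef] at this
  linarith

end abstract

/-- if `T` has an invariant half-line `α ↦ u + αν` (for all `α ≥ 0`), then
for every `M` larger than the Hilbert seminorm of `u`, the operator `T ∘ R_M` has an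
eigenvalue, and this eigenvalue equals the upper mean payoff `max_i ν_i` of `T`. -/
theorem stmt11 {n : ℕ} (hn : 0 < n)
    (A : Fin n → Type) [∀ i, Fintype (A i)] [∀ i, Nonempty (A i)]
    (B : ∀ i, A i → Type) [∀ i a, Fintype (B i a)] [∀ i a, Nonempty (B i a)]
    (r : ∀ i, ∀ a : A i, B i a → ℝ) (P : ∀ i, ∀ a : A i, B i a → Fin n → ℝ)
    (hP : ∀ i a b, (∀ j, 0 ≤ P i a b j) ∧ ∑ j, P i a b j = 1)
    (T : (Fin n → ℝ) → (Fin n → ℝ)) (hT : T = shapleyOp A B r P)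
    (u ν : Fin n → ℝ)
    (hhalf : ∀ α : ℝ, 0 ≤ α → T (u + α • ν) = u + (α + 1) • ν)
    (M : ℝ) (hM : (⨆ i, u i) - (⨅ i, u i) < M) :
    (∃ (lam : ℝ) (w : Fin n → ℝ), T (RM M w) = (fun _ => lam) + w) ∧
    (∀ (lam : ℝ) (w : Fin n → ℝ), T (RM M w) = (fun _ => lam) + w →
      lam = ⨆ i, ν i) := by
  haveI : Nonempty (Fin n) := ⟨⟨0, hn⟩⟩
  have hTmono : Monotone T := by rw [hT]; exact shapley_mono A B r P hP
  have hTaddc : ∀ (z : Fin n → ℝ) (c : ℝ), T (fun j => z j + c) = fun i => T z i + c := by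
    rw [hT]; exact shapley_addc A B r P hP
  set g : (Fin n → ℝ) → (Fin n → ℝ) := fun z => T (RM M z) with hgdef
  have hg_mono : Monotone g := fun a b hab => hTmono (RM_mono M hab)
  have hg_addc : ∀ (z : Fin n → ℝ) (c : ℝ), g (fun j => z j + c) = fun i => g z i + c := by
    intro z c
    show T (RM M fun j => z j + c) = _
    rw [RM_addc M z c]
    exact hTaddc (RM M z) c
  set lb : ℝ := ⨆ i, ν i with hlbdef
  have hνbdd : BddAbove (Set.range ν) := Set.Finite.bddAbove (Set.finite_range ν)
  have hν_le : ∀ i, ν i ≤ lb := fun i => le_ciSup hνbdd i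
  obtain ⟨i₀, hi₀⟩ := Finite.exists_max ν
  have hi₀eq : ν i₀ = lb := le_antisymm (hν_le i₀) (ciSup_le hi₀)
  have hRMu : RM M u = u := by
    funext i
    show max (u i) (⨆ j, (-M + u j)) = u i
    refine max_eq_left (ciSup_le fun j => ?_)
    have h1 : u j ≤ ⨆ k, u k := le_ciSup (Set.Finite.bddAbove (Set.finite_range u)) j
    have h2 : ⨅ k, u k ≤ u i := ciInf_le (Set.Finite.bddBelow (Set.finite_range u)) i
    linarith
  have hTu : T u = fun i => u i + ν i := by
    have e0 : u + (0 : ℝ) • ν = u := by simp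
    have h0 := hhalf 0 le_rfl
    rw [e0] at h0
    rw [h0]
    funext i
    simp
  have hgu : ∀ i, g u i ≤ lb + u i := by
    intro i
    show T (RM M u) i ≤ lb + u i
    rw [hRMu]
    simp only [hTu]
    linarith [hν_le i]
  -- the sub-eigenvector x
  set D : ℝ := ⨆ i, (M + u i - u i₀) / (lb - ν i) with hDdef
  set α : ℝ := 1 + max 0 D with hαdef
  have hα1 : (1 : ℝ) ≤ α := by
    rw [hαdef]; linarith [le_max_left (0:ℝ) D]
  have hαkey : ∀ i, ν i < lb → M + u i - u i₀ ≤ (α - 1) * (lb - ν i) := by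
    intro i hi
    have h1 : (M + u i - u i₀) / (lb - ν i) ≤ D := by
      rw [hDdef]
      exact le_ciSup (f := fun i => (M + u i - u i₀) / (lb - ν i))
        (Set.Finite.bddAbove (Set.finite_range _)) i
    have h2 : D ≤ α - 1 := by rw [hαdef]; linarith [le_max_right (0:ℝ) D]
    have h3 : 0 < lb - ν i := by linarith
    calc M + u i - u i₀ = ((M + u i - u i₀) / (lb - ν i)) * (lb - ν i) := by
          field_simp
      _ ≤ (α - 1) * (lb - ν i) := mul_le_mul_of_nonneg_right (le_trans h1 h2) (le_of_lt h3)
  set x : Fin n → ℝ := fun i => u i + α * ν i - α * lb with hxdef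
  have hxu : x ≤ u := fun i => by
    show u i + α * ν i - α * lb ≤ u i
    nlinarith [hν_le i]
  have hshift : x = fun j => (u + α • ν) j + (-(α * lb)) := by
    funext j
    simp only [hxdef, Pi.add_apply, Pi.smul_apply, smul_eq_mul]
    ring
  have hRMx : RM M x = fun i => RM M (u + α • ν) i + (-(α * lb)) := by
    rw [hshift]
    exact RM_addc M (u + α • ν) (-(α * lb))
  have hy' : (fun i => (u + (α - 1) • ν) i + lb) ≤ RM M (u + α • ν) := by
    intro i
    show (u + (α - 1) • ν) i + lb ≤ RM M (u + α • ν) i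
    simp only [Pi.add_apply, Pi.smul_apply, smul_eq_mul]
    by_cases hi : ν i = lb
    · have h1 : (u + α • ν) i ≤ RM M (u + α • ν) i := le_RM M _ i
      simp only [Pi.add_apply, Pi.smul_apply, smul_eq_mul] at h1
      rw [hi]
      nlinarith
    · have hi' : ν i < lb := lt_of_le_of_ne (hν_le i) hi
      have h2 : -M + (u + α • ν) i₀ ≤ ⨆ j, (-M + (u + α • ν) j) :=
        le_ciSup (f := fun j => -M + (u + α • ν) j)
          (Set.Finite.bddAbove (Set.finite_range _)) i₀
      have h3 : (⨆ j, (-M + (u + α • ν) j)) ≤ RM M (u + α • ν) i := le_max_right _ _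
      simp only [Pi.add_apply, Pi.smul_apply, smul_eq_mul, hi₀eq] at h2 h3
      have h4 := hαkey i hi'
      have hexp : (α - 1) * (lb - ν i) = α * lb - α * ν i - lb + ν i := by ring
      linarith
  have hgx : ∀ i, lb + x i ≤ g x i := by
    intro i
    have hz := hhalf (α - 1) (by linarith)
    have hα' : (α - 1) + 1 = α := by ring
    rw [hα'] at hz
    have h5 := hTmono hy' i
    have h6 := congrFun (hTaddc (u + (α - 1) • ν) lb) i
    simp only [h6, hz] at h5
    -- h5 : (u + α • ν) i + lb ≤ T (RM M (u + α • ν)) i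
    have h7 := congrFun (hTaddc (RM M (u + α • ν)) (-(α * lb))) i
    have h8 : g x i = T (RM M (u + α • ν)) i + (-(α * lb)) := by
      show T (RM M x) i = _
      rw [hRMx]
      exact h7
    show lb + x i ≤ g x i
    rw [h8]
    simp only [hxdef, Pi.add_apply, Pi.smul_apply, smul_eq_mul] at h5 ⊢
    linarith
  constructor
  · obtain ⟨w, hw⟩ := exist_eig g hg_mono hg_addc x u lb hxu hgx hgu
    refine ⟨lb, w, funext fun i => ?_⟩
    have h1 := congrFun hw i
    simpa using h1
  · intro lam w heq
    have hgw : g w = fun i => lam + w i := by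
      funext i
      show T (RM M w) i = lam + w i
      rw [heq]
      simp [Pi.add_apply]
    have hle := eig_le g hg_mono hg_addc u w lam lb hgw hgu
    have hge := eig_ge g hg_mono hg_addc x w lam lb hgw hgx
    linarith
end

section
/- Let n ≥ 1 and D ≥ 1 be integers and let P be an n×n stochastic matrix (nonnegative entries, each row summing to 1) with rational entries whose numerators and denominators, written in lowest terms, are at most D. Assume P is irreducible, i.e., for all indices i, j there exists k ≥ 1 with (P^k)_{ij} > 0. Then every invariant probability vector m of P (that is, m ∈ ℝⁿ with nonnegative entries summing to 1 and mᵀP = mᵀ) has rational entries, and there is a positive integer q with q ≤ n^{n/2} · D^{n²} such that q·m_i is an integer for every i. -/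
open scoped RealInnerProductSpace

theorem hadamard_rows {n : ℕ} (M : Matrix (Fin n) (Fin n) ℝ) :
    |M.det| ≤ ∏ i, Real.sqrt (∑ j, (M i j) ^ 2) := by
  classical
  letI : WellFoundedLT (Fin n) := Finite.to_wellFoundedLT
  have h : Module.finrank ℝ (EuclideanSpace ℝ (Fin n)) = Fintype.card (Fin n) := by
    simp [finrank_euclideanSpace]
  set f : Fin n → EuclideanSpace ℝ (Fin n) := fun i => (WithLp.equiv 2 (Fin n → ℝ)).symm (M i) with hf
  have hfij : ∀ i j, f i j = M i j := fun i j => rfl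
  set g : OrthonormalBasis (Fin n) ℝ (EuclideanSpace ℝ (Fin n)) := InnerProductSpace.gramSchmidtOrthonormalBasis h f with hg
  set s := EuclideanSpace.basisFun (Fin n) ℝ with hs
  have key1 : s.toBasis.toMatrix f = M.transpose := by
    ext i j
    rw [Matrix.transpose_apply, Module.Basis.toMatrix_apply]
    rfl
  have key2 : s.toBasis.toMatrix f = s.toBasis.toMatrix g.toBasis * g.toBasis.toMatrix f :=
    (Module.Basis.toMatrix_mul_toMatrix _ _ _).symm
  have habs1 : |(s.toBasis.toMatrix g.toBasis).det| = 1 := by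
    have := s.det_to_matrix_orthonormalBasis g
    rw [Module.Basis.det_apply] at this
    simpa using this
  have hdetgf : (g.toBasis.toMatrix f).det = ∏ i, ⟪g i, f i⟫ := by
    have := InnerProductSpace.gramSchmidtOrthonormalBasis_det h f
    rw [Module.Basis.det_apply] at this
    exact this
  have hMd : |M.det| = |(g.toBasis.toMatrix f).det| := by
    rw [← Matrix.det_transpose M, ← key1, key2, Matrix.det_mul, abs_mul, habs1, one_mul]
  rw [hMd, hdetgf, Finset.abs_prod]
  apply Finset.prod_le_prod (fun i _ => abs_nonneg _)
  intro i _
  have hb : ‖g i‖ = 1 := g.orthonormal.1 i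
  calc |⟪g i, f i⟫| ≤ ‖g i‖ * ‖f i‖ := abs_real_inner_le_norm _ _
    _ = Real.sqrt (∑ j, (M i j) ^ 2) := by
        rw [hb, one_mul, EuclideanSpace.norm_eq]
        congr 1
        refine Finset.sum_congr rfl fun j _ => ?_
        rw [hfij, Real.norm_eq_abs, sq_abs]


theorem stoch_pow {n : ℕ} (P : Matrix (Fin n) (Fin n) ℝ)
    (hnonneg : ∀ i j, 0 ≤ P i j) (hrow : ∀ i, (∑ j, P i j) = 1) (k : ℕ) :
    (∀ i j, 0 ≤ (P ^ k) i j) ∧ (∀ i, (∑ j, (P ^ k) i j) = 1) := by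
  induction k with
  | zero =>
    constructor <;> intro i
    · intro j
      simp [Matrix.one_apply]
      positivity
    · simp [Matrix.one_apply]
  | succ k ih =>
    rw [pow_succ]
    constructor
    · intro i j
      rw [Matrix.mul_apply]
      exact Finset.sum_nonneg fun l _ => mul_nonneg (ih.1 i l) (hnonneg l j)
    · intro i
      simp only [Matrix.mul_apply]
      rw [Finset.sum_comm]
      calc (∑ l, ∑ j, (P ^ k) i l * P l j) = ∑ l, (P ^ k) i l * ∑ j, P l j := by
            simp [Finset.mul_sum]
        _ = 1 := by simp [hrow, ih.2 i]

theorem ker_lemma {n : ℕ} (P : Matrix (Fin n) (Fin n) ℝ)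
    (hnonneg : ∀ i j, 0 ≤ P i j) (hrow : ∀ i, (∑ j, P i j) = 1)
    (hirr : ∀ i j, ∃ k : ℕ, 1 ≤ k ∧ 0 < (P ^ k) i j)
    (v : Fin n → ℝ) (hv : ∀ j, ∑ i, v i * P i j = v j) (hsum : (∑ i, v i) = 0) :
    v = 0 := by
  by_contra hv0
  -- invariance under powers
  have hpow : ∀ k j, ∑ i, v i * (P ^ k) i j = v j := by
    intro k
    induction k with
    | zero => intro j; simp [Matrix.one_apply]
    | succ k ih =>
      intro j
      rw [pow_succ]
      simp only [Matrix.mul_apply, Finset.mul_sum]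
      rw [Finset.sum_comm]
      calc (∑ l, ∑ i, v i * ((P ^ k) i l * P l j))
          = ∑ l, (∑ i, v i * (P ^ k) i l) * P l j := by
            congr 1; ext l; rw [Finset.sum_mul]; congr 1; ext i; ring
        _ = v j := by simp only [ih]; exact hv j
  -- |v| invariance under powers
  have habs : ∀ k j, |v j| = ∑ i, |v i| * (P ^ k) i j := by
    intro k
    have hQn := (stoch_pow P hnonneg hrow k).1
    have hQr := (stoch_pow P hnonneg hrow k).2
    have hle : ∀ j, |v j| ≤ ∑ i, |v i| * (P ^ k) i j := by
      intro j
      rw [← hpow k j]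
      refine (Finset.abs_sum_le_sum_abs _ _).trans ?_
      refine le_of_eq (Finset.sum_congr rfl fun i _ => ?_)
      rw [abs_mul, abs_of_nonneg (hQn i j)]
    have hsums : (∑ j, |v j|) = ∑ j, ∑ i, |v i| * (P ^ k) i j := by
      rw [Finset.sum_comm]
      calc (∑ j, |v j|) = ∑ i, |v i| * 1 := by simp
        _ = ∑ i, ∑ j, |v i| * (P ^ k) i j := by
            refine Finset.sum_congr rfl fun i _ => ?_
            rw [← Finset.mul_sum, hQr i]
    intro j
    exact ((Finset.sum_eq_sum_iff_of_le (fun j _ => hle j)).mp hsums j (Finset.mem_univ j))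
  -- find positive and negative entries
  have hex : ∃ a, 0 < v a := by
    by_contra hno
    push_neg at hno
    have : ∀ i ∈ Finset.univ, v i = 0 :=
      (Finset.sum_eq_zero_iff_of_nonpos (fun i _ => hno i)).mp hsum
    exact hv0 (funext fun i => this i (Finset.mem_univ i))
  have hex' : ∃ b, v b < 0 := by
    by_contra hno
    push_neg at hno
    have : ∀ i ∈ Finset.univ, v i = 0 :=
      (Finset.sum_eq_zero_iff_of_nonneg (fun i _ => hno i)).mp hsum
    exact hv0 (funext fun i => this i (Finset.mem_univ i))
  obtain ⟨a, ha⟩ := hex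
  obtain ⟨b, hb⟩ := hex'
  obtain ⟨k, -, hk⟩ := hirr b a
  have hQn := (stoch_pow P hnonneg hrow k).1
  have e1 : ∑ i, v i * (P ^ k) i a = v a := hpow k a
  have e2 : ∑ i, |v i| * (P ^ k) i a = v a := by
    rw [← habs k a, abs_of_pos ha]
  have e3 : ∑ i, (|v i| - v i) * (P ^ k) i a = 0 := by
    have : (∑ i, (|v i| - v i) * (P ^ k) i a)
        = (∑ i, |v i| * (P ^ k) i a) - ∑ i, v i * (P ^ k) i a := by
      rw [← Finset.sum_sub_distrib]
      refine Finset.sum_congr rfl fun i _ => by ring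
    rw [this, e1, e2, sub_self]
  have hterm : (|v b| - v b) * (P ^ k) b a = 0 := by
    have hnn : ∀ i ∈ Finset.univ, 0 ≤ (|v i| - v i) * (P ^ k) i a := fun i _ =>
      mul_nonneg (by simp [sub_nonneg, le_abs_self]) (hQn i a)
    exact (Finset.sum_eq_zero_iff_of_nonneg hnn).mp e3 b (Finset.mem_univ b)
  have : 0 < (|v b| - v b) * (P ^ k) b a :=
    mul_pos (by rw [abs_of_neg hb]; linarith) hk
  rw [hterm] at this
  exact lt_irrefl 0 this

theorem int_of_den_dvd (q : ℚ) (k : ℕ) (h : q.den ∣ k) : ∃ z : ℤ, (k : ℚ) * q = (z : ℚ) := by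
  obtain ⟨t, rfl⟩ := h
  refine ⟨t * q.num, ?_⟩
  push_cast
  rw [mul_comm (q.den : ℚ) (t : ℚ), mul_assoc, mul_comm (q.den : ℚ) q,
    Rat.mul_den_eq_num]


/-- bound on the denominators of the invariant probability vector of an
irreducible stochastic matrix with rational entries whose numerators and denominators
(in lowest terms) are at most `D`: the common denominator is at most `n^{n/2} · D^{n²}`. -/
theorem stmt12 {n : ℕ} (hn : 0 < n) (D : ℕ) (hD : 1 ≤ D)
    (P : Matrix (Fin n) (Fin n) ℝ)
    (hnonneg : ∀ i j, 0 ≤ P i j)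
    (hrow : ∀ i, (∑ j, P i j) = 1)
    (hrat : ∀ i j, ∃ q : ℚ, P i j = (q : ℝ) ∧ q.num.natAbs ≤ D ∧ q.den ≤ D)
    (hirr : ∀ i j, ∃ k : ℕ, 1 ≤ k ∧ 0 < (P ^ k) i j) :
    ∀ m : Fin n → ℝ,
      (∀ i, 0 ≤ m i) → (∑ i, m i) = 1 → (∀ j, ∑ i, m i * P i j = m j) →
      (∀ i, ∃ q : ℚ, m i = (q : ℝ)) ∧
      ∃ q : ℕ, 0 < q ∧ (q : ℝ) ≤ (n : ℝ) ^ ((n : ℝ) / 2) * (D : ℝ) ^ (n ^ 2) ∧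
        ∀ i, ∃ z : ℤ, (q : ℝ) * m i = (z : ℝ) := by
  classical
  intro m hm0 hm1 hminv
  set z0 : Fin n := ⟨0, hn⟩ with hz0
  set Qm : Fin n → Fin n → ℚ := fun i j => (hrat i j).choose with hQmdef
  have hQm : ∀ i j, P i j = ((Qm i j : ℚ) : ℝ) := fun i j => (hrat i j).choose_spec.1
  have hQmden : ∀ i j, (Qm i j).den ≤ D := fun i j => (hrat i j).choose_spec.2.2
  set d : Fin n → ℕ := fun j => ∏ i, (Qm i j).den with hddef
  have hdpos : ∀ j, 0 < d j := fun j => Finset.prod_pos fun i _ => (Qm i j).pos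
  have hdle : ∀ j, d j ≤ D ^ n := by
    intro j
    calc d j ≤ ∏ _i : Fin n, D := Finset.prod_le_prod' fun i _ => hQmden i j
      _ = D ^ n := by simp [Finset.prod_const]
  set Cr : Matrix (Fin n) (Fin n) ℝ := fun i j =>
    if j = z0 then 1 else (d j : ℝ) * (P i j - if i = j then 1 else 0) with hCrdef
  -- expansion helper
  have hone : ∀ (w : Fin n → ℝ) (j : Fin n),
      (∑ i, w i * (if i = j then (1:ℝ) else 0)) = w j := by
    intro w j
    rw [Finset.sum_eq_single j]
    · simp
    · intro i _ hij; simp [hij]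
    · intro h; exact absurd (Finset.mem_univ j) h
  have hexp : ∀ (w : Fin n → ℝ) (j : Fin n), j ≠ z0 →
      (∑ i, w i * Cr i j) = (d j : ℝ) * ((∑ i, w i * P i j) - w j) := by
    intro w j hj
    simp only [hCrdef, if_neg hj]
    calc (∑ i, w i * ((d j : ℝ) * (P i j - if i = j then 1 else 0)))
        = ∑ i, (d j : ℝ) * (w i * P i j - w i * (if i = j then 1 else 0)) := by
          refine Finset.sum_congr rfl fun i _ => by ring
      _ = (d j : ℝ) * ∑ i, (w i * P i j - w i * (if i = j then 1 else 0)) := by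
          rw [Finset.mul_sum]
      _ = (d j : ℝ) * ((∑ i, w i * P i j) - ∑ i, w i * (if i = j then 1 else 0)) := by
          rw [Finset.sum_sub_distrib]
      _ = (d j : ℝ) * ((∑ i, w i * P i j) - w j) := by rw [hone]
  -- integer entries
  have hint : ∀ i j, ∃ z : ℤ, Cr i j = (z : ℝ) := by
    intro i j
    by_cases hj : j = z0
    · exact ⟨1, by simp [hCrdef, hj]⟩
    · have hdvd : (Qm i j).den ∣ d j := Finset.dvd_prod_of_mem _ (Finset.mem_univ i)
      obtain ⟨z, hz⟩ := int_of_den_dvd (Qm i j) (d j) hdvd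
      refine ⟨z - (if i = j then (d j : ℤ) else 0), ?_⟩
      have hzr : (d j : ℝ) * P i j = (z : ℝ) := by
        rw [hQm i j]
        exact_mod_cast congrArg (fun q : ℚ => (q : ℝ)) hz
      simp only [hCrdef, if_neg hj]
      rw [mul_sub, hzr]
      by_cases hij : i = j <;> simp [hij]
  choose Ci hCi using hint
  have hCrmap : Cr = (Matrix.of Ci).map (Int.cast : ℤ → ℝ) := by
    ext i j; exact hCi i j
  -- m satisfies the linear system
  have hmC : ∀ j, ∑ i, m i * Cr i j = if j = z0 then 1 else 0 := by
    intro j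
    by_cases hj : j = z0
    · simp [hCrdef, hj, hm1]
    · rw [if_neg hj, hexp m j hj, hminv j, sub_self, mul_zero]
  -- determinant nonzero
  have hdet : Cr.det ≠ 0 := by
    intro h0
    obtain ⟨y, hy0, hy⟩ := (Matrix.exists_vecMul_eq_zero_iff).mpr h0
    have hyj : ∀ j, ∑ i, y i * Cr i j = 0 := by
      intro j
      have := congrFun hy j
      simpa [Matrix.vecMul, dotProduct] using this
    have hysum : (∑ i, y i) = 0 := by
      have := hyj z0
      simpa [hCrdef] using this
    have hyinv' : ∀ j, j ≠ z0 → ∑ i, y i * P i j = y j := by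
      intro j hj
      have h1 := hyj j
      rw [hexp y j hj] at h1
      have hd : (d j : ℝ) ≠ 0 := by
        exact_mod_cast (hdpos j).ne'
      have := mul_eq_zero.mp h1
      rcases this with h | h
      · exact absurd h hd
      · linarith [sub_eq_zero.mp h]
    have hall : ∑ j, ((∑ i, y i * P i j) - y j) = 0 := by
      rw [Finset.sum_sub_distrib]
      have : (∑ j, ∑ i, y i * P i j) = ∑ i, y i := by
        rw [Finset.sum_comm]
        calc (∑ i, ∑ j, y i * P i j) = ∑ i, y i * ∑ j, P i j := by
              refine Finset.sum_congr rfl fun i _ => (Finset.mul_sum _ _ _).symm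
          _ = ∑ i, y i := by simp [hrow]
      rw [this, sub_self]
    have hz0eq : ∑ i, y i * P i z0 = y z0 := by
      have h := Finset.sum_eq_single_of_mem (s := Finset.univ)
        (f := fun j => (∑ i, y i * P i j) - y j) z0 (Finset.mem_univ z0)
        (by
          intro b _ hb
          show (∑ i, y i * P i b) - y b = 0
          rw [hyinv' b hb, sub_self])
      have hsingle : ((∑ i, y i * P i z0) - y z0) = 0 := by
        have h2 := hall
        rw [h] at h2
        simpa using h2
      linarith [hsingle]
    have hyinv : ∀ j, ∑ i, y i * P i j = y j := by
      intro j
      by_cases hj : j = z0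
      · rw [hj]; exact hz0eq
      · exact hyinv' j hj
    exact hy0 (ker_lemma P hnonneg hrow hirr y hyinv hysum)
  -- m in terms of the inverse
  have hmval : ∀ j, Cr.det * m j = Cr.adjugate z0 j := by
    have hmv : Matrix.vecMul m Cr = fun j => if j = z0 then 1 else 0 := by
      funext j
      simpa [Matrix.vecMul, dotProduct] using hmC j
    have hu : IsUnit Cr.det := isUnit_iff_ne_zero.mpr hdet
    have hinv1 : Cr * Cr⁻¹ = 1 := Matrix.mul_nonsing_inv Cr hu
    have hm' : m = Matrix.vecMul (fun j => if j = z0 then (1:ℝ) else 0) Cr⁻¹ := by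
      have := congrArg (fun v => Matrix.vecMul v Cr⁻¹) hmv
      simpa [Matrix.vecMul_vecMul, hinv1] using this
    intro j
    have hmj : m j = Cr⁻¹ z0 j := by
      rw [hm']
      simp [Matrix.vecMul, dotProduct]
    rw [hmj, Matrix.inv_def, Ring.inverse_eq_inv]
    simp only [Matrix.smul_apply, smul_eq_mul]
    field_simp
  -- pass to integers
  set e : ℤ := (Matrix.of Ci).det with hedef
  have hdetCast : Cr.det = (e : ℝ) := by
    rw [hCrmap, hedef]
    exact ((Int.castRingHom ℝ).map_det (Matrix.of Ci)).symm
  have hadjCast : ∀ j, Cr.adjugate z0 j = (((Matrix.of Ci).adjugate z0 j : ℤ) : ℝ) := by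
    intro j
    rw [hCrmap]
    rw [show ((Matrix.of Ci).map (Int.cast : ℤ → ℝ)) = (Int.castRingHom ℝ).mapMatrix (Matrix.of Ci) from rfl,
      ← (Int.castRingHom ℝ).map_adjugate (Matrix.of Ci)]
    rfl
  have he0 : e ≠ 0 := by
    intro h
    apply hdet
    rw [hdetCast, h, Int.cast_zero]
  set q : ℕ := e.natAbs with hqdef
  have hq0 : 0 < q := Int.natAbs_pos.mpr he0
  have hqcast : (q : ℝ) = |(e : ℝ)| := by
    rw [hqdef]
    push_cast [Nat.cast_natAbs]
    rfl
  -- integrality of q * m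
  have hintm : ∀ i, ∃ z : ℤ, (q : ℝ) * m i = (z : ℝ) := by
    intro i
    have h1 : (e : ℝ) * m i = (((Matrix.of Ci).adjugate z0 i : ℤ) : ℝ) := by
      rw [← hdetCast, hmval i, hadjCast i]
    by_cases he : 0 ≤ e
    · refine ⟨(Matrix.of Ci).adjugate z0 i, ?_⟩
      rw [hqcast, abs_of_nonneg (by exact_mod_cast he), h1]
    · refine ⟨-(Matrix.of Ci).adjugate z0 i, ?_⟩
      push_neg at he
      rw [hqcast, abs_of_neg (by exact_mod_cast he)]
      push_cast
      rw [← h1]; ring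
  refine ⟨?_, q, hq0, ?_, hintm⟩
  · -- rationality
    intro i
    obtain ⟨z, hz⟩ := hintm i
    refine ⟨(z : ℚ) / (q : ℚ), ?_⟩
    have hqne : (q : ℝ) ≠ 0 := by exact_mod_cast hq0.ne'
    push_cast
    rw [eq_div_iff hqne, mul_comm, hz]
  · -- the bound
    have hPle1 : ∀ i j, P i j ≤ 1 := by
      intro i j
      rw [← hrow i]
      exact Finset.single_le_sum (fun l _ => hnonneg i l) (Finset.mem_univ j)
    set d' : Fin n → ℕ := fun j => if j = z0 then 1 else d j with hd'def
    have hF : ∀ j, Real.sqrt (∑ i, (Cr i j) ^ 2) ≤ Real.sqrt n * (d' j : ℝ) := by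
      intro j
      have hsumle : (∑ i, (Cr i j) ^ 2) ≤ (n : ℝ) * ((d' j : ℝ)) ^ 2 := by
        calc (∑ i, (Cr i j) ^ 2) ≤ ∑ _i : Fin n, ((d' j : ℝ)) ^ 2 := by
              refine Finset.sum_le_sum fun i _ => ?_
              by_cases hj : j = z0
              · simp [hCrdef, hj, hd'def]
              · simp only [hCrdef, hd'def, if_neg hj]
                rw [mul_pow]
                have h2 : (P i j - if i = j then 1 else 0) ^ 2 ≤ 1 := by
                  have h0' := hnonneg i j
                  have h1' := hPle1 i j
                  by_cases hij : i = j
                  · subst hij; rw [if_pos rfl]; nlinarith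
                  · simp only [if_neg hij]; nlinarith
                calc ((d j : ℝ)) ^ 2 * (P i j - if i = j then 1 else 0) ^ 2
                    ≤ ((d j : ℝ)) ^ 2 * 1 := by
                      apply mul_le_mul_of_nonneg_left h2 (by positivity)
                  _ = ((d j : ℝ)) ^ 2 := by ring
          _ = (n : ℝ) * ((d' j : ℝ)) ^ 2 := by
              rw [Finset.sum_const]
              simp [mul_comm]
      calc Real.sqrt (∑ i, (Cr i j) ^ 2) ≤ Real.sqrt ((n : ℝ) * ((d' j : ℝ)) ^ 2) :=
            Real.sqrt_le_sqrt hsumle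
        _ = Real.sqrt n * (d' j : ℝ) := by
            rw [Real.sqrt_mul (by positivity), Real.sqrt_sq (by positivity)]
    have hhad := hadamard_rows Cr.transpose
    rw [Matrix.det_transpose] at hhad
    have hq1 : (q : ℝ) ≤ ∏ j, Real.sqrt (∑ i, (Cr i j) ^ 2) := by
      rw [hqcast, ← hdetCast]
      exact hhad
    have hq2 : (∏ j, Real.sqrt (∑ i, (Cr i j) ^ 2)) ≤ ∏ j : Fin n, (Real.sqrt n * (d' j : ℝ)) :=
      Finset.prod_le_prod (fun j _ => Real.sqrt_nonneg _) (fun j _ => hF j)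
    have hq3 : (∏ j : Fin n, (Real.sqrt n * (d' j : ℝ)))
        = (Real.sqrt n) ^ n * ∏ j : Fin n, (d' j : ℝ) := by
      rw [Finset.prod_mul_distrib, Finset.prod_const]
      simp
    have hq4 : (∏ j : Fin n, (d' j : ℝ)) ≤ (D : ℝ) ^ (n ^ 2) := by
      calc (∏ j : Fin n, (d' j : ℝ)) ≤ ∏ _j : Fin n, ((D : ℝ) ^ n) := by
            refine Finset.prod_le_prod (fun j _ => by positivity) (fun j _ => ?_)
            by_cases hj : j = z0
            · simp only [hd'def, if_pos hj, Nat.cast_one]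
              exact one_le_pow₀ (by exact_mod_cast hD)
            · simp only [hd'def, if_neg hj]
              exact_mod_cast hdle j
        _ = (D : ℝ) ^ (n ^ 2) := by
            rw [Finset.prod_const]
            simp [← pow_mul, sq]
    have hq5 : (Real.sqrt n) ^ n = (n : ℝ) ^ ((n : ℝ) / 2) := by
      rw [Real.sqrt_eq_rpow, ← Real.rpow_natCast ((n:ℝ) ^ ((1:ℝ)/2)) n,
        ← Real.rpow_mul (by positivity)]
      norm_num
      ring_nf
    calc (q : ℝ) ≤ ∏ j, Real.sqrt (∑ i, (Cr i j) ^ 2) := hq1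
      _ ≤ ∏ j : Fin n, (Real.sqrt n * (d' j : ℝ)) := hq2
      _ = (Real.sqrt n) ^ n * ∏ j : Fin n, (d' j : ℝ) := hq3
      _ ≤ (Real.sqrt n) ^ n * (D : ℝ) ^ (n ^ 2) := by
          apply mul_le_mul_of_nonneg_left hq4 (by positivity)
      _ = (n : ℝ) ^ ((n : ℝ) / 2) * (D : ℝ) ^ (n ^ 2) := by rw [hq5]
end

section
/- Let T : ℝⁿ → ℝⁿ be additively homogeneous, let M ≥ 0, and define T_M : ℝⁿ × ℝⁿ → ℝⁿ × ℝⁿ by T_M(x, y) = ( T(y), R_M(x) ). Then: (i) if v ∈ ℝⁿ and λ ∈ ℝ satisfy T(R_M(v)) = λe + v, then the pair ( v, R_M(v) − (λ/2)e ) is a bias vector of T_M with eigenvalue λ/2, i.e., T_M( v, R_M(v) − (λ/2)e ) = (λ/2)·(e,e) + ( v, R_M(v) − (λ/2)e ); (ii) conversely, if T_M(x, y) = μ·(e,e) + (x, y) for some μ ∈ ℝ, then T(R_M(x)) = 2μ·e + x and y = R_M(x) − μe. (Thus all bias vectors of T_M arise as in (i).) -/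
/-- correspondence between the bias vectors of `T ∘ R_M` and those of the
doubled operator `T_M(x,y) = (T(y), R_M(x))`. -/
theorem stmt13 {n : ℕ} (hn : 0 < n) (M : ℝ) (hM : 0 ≤ M)
    (T : (Fin n → ℝ) → (Fin n → ℝ))
    (hhom : ∀ (x : Fin n → ℝ) (c : ℝ), T (x + fun _ => c) = T x + fun _ => c)
    (TM : (Fin n → ℝ) × (Fin n → ℝ) → (Fin n → ℝ) × (Fin n → ℝ))
    (hTM : TM = fun p => (T p.2, RM M p.1)) :
    (∀ (v : Fin n → ℝ) (lam : ℝ), T (RM M v) = (fun _ => lam) + v →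
      TM (v, RM M v - fun _ => lam / 2) =
        ((fun _ => lam / 2) + v,
          (fun _ => lam / 2) + (RM M v - fun _ => lam / 2))) ∧
    (∀ (x y : Fin n → ℝ) (mu : ℝ),
      TM (x, y) = ((fun _ => mu) + x, (fun _ => mu) + y) →
      T (RM M x) = (fun _ => 2 * mu) + x ∧ y = RM M x - fun _ => mu) := by
  constructor
  · intro v lam hv
    subst hTM
    have h1 : (RM M v - fun _ => lam / 2) = RM M v + fun _ => -(lam / 2) := by
      funext i; simp [sub_eq_add_neg]
    simp only [h1]
    rw [Prod.mk.injEq]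
    constructor
    · rw [hhom, hv]
      funext i
      simp
      ring
    · funext i
      simp
  · intro x y mu h
    subst hTM
    simp only [Prod.mk.injEq] at h
    obtain ⟨h1, h2⟩ := h
    have hy : y = RM M x - fun _ => mu := by
      rw [h2]; funext i; simp
    constructor
    · have : RM M x = y + fun _ => mu := by
        rw [hy]; funext i; simp
      rw [this, hhom, h1]
      funext i; simp; ring
    · exact hy
end

section
/- Let T : ℝⁿ → ℝⁿ be a perfect-information finite Shapley operator and for ε ≥ 0 set g_ε = (ε, ε², …, εⁿ) ∈ ℝⁿ. Then there exist ε₁ > 0, a policy σ of player Min, a policy τ of player Max, and an invariant probability vector m ∈ M(P^{στ}) such that for all ε ∈ [0, ε₁]: min_{σ'} max { ⟨m', g_ε + r^{σ'τ'}⟩ : τ' a policy of player Max, m' ∈ M(P^{σ'τ'}) } = ⟨m, g_ε + r^{στ}⟩, where the minimum is over all policies σ' of player Min. (This common value equals the upper mean payoff 𝜒̄(g_ε + T).) -/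
open Finset

noncomputable section Aux15

/-- polynomial evaluation with coefficients `c`, degree < N -/
def polyval (N : ℕ) (c : ℕ → ℝ) (ε : ℝ) : ℝ := ∑ i ∈ Finset.range N, c i * ε ^ i

/-- pairwise domination of polynomials near 0+ -/
lemma pair_dom (N : ℕ) (c d : ℕ → ℝ) :
    ∃ δ > 0, (∀ ε, 0 ≤ ε → ε ≤ δ → polyval N c ε ≤ polyval N d ε) ∨
             (∀ ε, 0 ≤ ε → ε ≤ δ → polyval N d ε ≤ polyval N c ε) := by
  classical
  -- reduce to sign of e = d - c
  by_cases h : ∃ i < N, d i ≠ c i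
  · -- least index j with d j ≠ c j
    have hex : ∃ i, i < N ∧ d i ≠ c i := by tauto
    set j := Nat.find hex with hj
    obtain ⟨hjN, hje⟩ := Nat.find_spec hex
    have hmin : ∀ i < j, i < N → d i = c i := by
      intro i hij hiN
      by_contra hne
      exact Nat.find_min hex hij ⟨hiN, hne⟩
    -- main estimate, stated for a sign s
    have key : ∀ e : ℕ → ℝ, (∀ i < j, i < N → e i = 0) → 0 < e j → j < N →
        ∃ δ > 0, ∀ ε, 0 ≤ ε → ε ≤ δ → 0 ≤ ∑ i ∈ Finset.range N, e i * ε ^ i := by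
      intro e hzero hpos hjN'
      set S : ℝ := ∑ i ∈ Finset.range N, |e i| with hS
      have hS0 : 0 ≤ S := Finset.sum_nonneg fun i _ => abs_nonneg _
      refine ⟨min 1 (e j / (S + 1)), lt_min one_pos (by positivity), ?_⟩
      intro ε hε0 hεδ
      have hε1 : ε ≤ 1 := le_trans hεδ (min_le_left _ _)
      have hεS : ε * (S + 1) ≤ e j := by
        have := le_trans hεδ (min_le_right _ _)
        calc ε * (S + 1) ≤ (e j / (S+1)) * (S+1) := by
              apply mul_le_mul_of_nonneg_right this (by positivity)
          _ = e j := by field_simp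
      have hsplit : ∑ i ∈ Finset.range N, e i * ε ^ i
          = e j * ε ^ j + ∑ i ∈ Finset.Ico (j+1) N, e i * ε ^ i := by
        rw [Finset.range_eq_Ico, ← Finset.sum_Ico_consecutive _ (Nat.zero_le j) (le_of_lt hjN'),
          ← Finset.sum_Ico_consecutive _ (Nat.le_succ j) hjN', Finset.sum_Ico_succ_top (le_refl j)]
        have : ∑ i ∈ Finset.Ico 0 j, e i * ε ^ i = 0 := by
          apply Finset.sum_eq_zero
          intro i hi
          rw [Finset.mem_Ico] at hi
          rw [hzero i hi.2 (lt_of_lt_of_le hi.2 (le_of_lt hjN')), zero_mul]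
        rw [this, Finset.Ico_self, Finset.sum_empty, Nat.succ_eq_add_one]; ring
      rw [hsplit]
      have hbound : ∀ i ∈ Finset.Ico (j+1) N, -( |e i| * ε ^ (j+1)) ≤ e i * ε ^ i := by
        intro i hi
        rw [Finset.mem_Ico] at hi
        have h1 : ε ^ i ≤ ε ^ (j+1) := pow_le_pow_of_le_one hε0 hε1 hi.1
        have h2 : e i * ε ^ i ≥ -|e i| * ε ^ i := by
          apply mul_le_mul_of_nonneg_right (neg_abs_le _) (pow_nonneg hε0 i)
        calc -(|e i| * ε ^ (j+1)) = -|e i| * ε ^ (j+1) := by ring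
          _ ≤ -|e i| * ε ^ i := by
              apply mul_le_mul_of_nonpos_left h1 (neg_nonpos.2 (abs_nonneg _))
          _ ≤ e i * ε ^ i := h2
      have hge : ∑ i ∈ Finset.Ico (j+1) N, e i * ε ^ i ≥ -(S * ε ^ (j+1)) := by
        calc ∑ i ∈ Finset.Ico (j+1) N, e i * ε ^ i
            ≥ ∑ i ∈ Finset.Ico (j+1) N, -(|e i| * ε ^ (j+1)) := Finset.sum_le_sum hbound
          _ = -((∑ i ∈ Finset.Ico (j+1) N, |e i|) * ε ^ (j+1)) := by
              rw [Finset.sum_neg_distrib, Finset.sum_mul]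
          _ ≥ -(S * ε ^ (j+1)) := by
              apply neg_le_neg
              apply mul_le_mul_of_nonneg_right _ (pow_nonneg hε0 _)
              apply Finset.sum_le_sum_of_subset_of_nonneg
              · rw [Finset.range_eq_Ico]; exact Finset.Ico_subset_Ico (Nat.zero_le _) le_rfl
              · intro i _ _; exact abs_nonneg _
      have : e j * ε ^ j - S * ε ^ (j+1) ≥ 0 := by
        have : S * ε ^ (j+1) = S * ε * ε ^ j := by ring
        rw [this]
        have h3 : S * ε ≤ e j := by nlinarith
        nlinarith [pow_nonneg hε0 j]
      linarith
    -- case on sign of d j - c j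
    rcases lt_or_gt_of_ne (sub_ne_zero.2 hje) with hneg | hpos
    · -- d j < c j : c dominates
      obtain ⟨δ, hδ, hd⟩ := key (fun i => c i - d i)
        (fun i hij hiN => by simp [hmin i hij hiN]) (by show (0:ℝ) < c j - d j; linarith) hjN
      refine ⟨δ, hδ, Or.inr ?_⟩
      intro ε h0 h1
      have := hd ε h0 h1
      simp only [polyval, sub_mul, Finset.sum_sub_distrib] at this ⊢
      linarith
    · obtain ⟨δ, hδ, hd⟩ := key (fun i => d i - c i)
        (fun i hij hiN => by simp [hmin i hij hiN]) (by show (0:ℝ) < d j - c j; linarith) hjN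
      refine ⟨δ, hδ, Or.inl ?_⟩
      intro ε h0 h1
      have := hd ε h0 h1
      simp only [polyval, sub_mul, Finset.sum_sub_distrib] at this ⊢
      linarith
  · push_neg at h
    refine ⟨1, one_pos, Or.inl ?_⟩
    intro ε _ _
    unfold polyval
    apply le_of_eq
    apply Finset.sum_congr rfl
    intro i hi
    rw [h i (Finset.mem_range.1 hi)]

lemma poly_max_finset (N : ℕ) (F : Finset (ℕ → ℝ)) (hne : F.Nonempty) :
    ∃ c ∈ F, ∃ δ > 0, ∀ ε, 0 ≤ ε → ε ≤ δ → ∀ d ∈ F, polyval N d ε ≤ polyval N c ε := by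
  classical
  induction F using Finset.induction_on with
  | empty => exact absurd hne (by simp)
  | @insert a F ha IH =>
    rcases F.eq_empty_or_nonempty with rfl | hF
    · exact ⟨a, by simp, 1, one_pos, by
        intro ε _ _ d hd
        simp only [Finset.mem_insert, Finset.notMem_empty, or_false] at hd
        subst hd; exact le_rfl⟩
    · obtain ⟨c, hcF, δ, hδ, hdom⟩ := IH hF
      obtain ⟨δ', hδ', hpd⟩ := pair_dom N a c
      rcases hpd with hac | hca
      · -- a ≤ c near 0, c stays max
        refine ⟨c, Finset.mem_insert_of_mem hcF, min δ δ', lt_min hδ hδ', ?_⟩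
        intro ε h0 h1 d hd
        rcases Finset.mem_insert.1 hd with rfl | hdF
        · exact hac ε h0 (le_trans h1 (min_le_right _ _))
        · exact hdom ε h0 (le_trans h1 (min_le_left _ _)) d hdF
      · refine ⟨a, Finset.mem_insert_self _ _, min δ δ', lt_min hδ hδ', ?_⟩
        intro ε h0 h1 d hd
        rcases Finset.mem_insert.1 hd with rfl | hdF
        · exact le_rfl
        · exact le_trans (hdom ε h0 (le_trans h1 (min_le_left _ _)) d hdF)
            (hca ε h0 (le_trans h1 (min_le_right _ _)))

lemma poly_max (N : ℕ) (D : Set (ℕ → ℝ)) (hfin : D.Finite) (hne : D.Nonempty) :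
    ∃ c ∈ D, ∃ δ > 0, ∀ ε, 0 ≤ ε → ε ≤ δ → ∀ d ∈ D, polyval N d ε ≤ polyval N c ε := by
  classical
  obtain ⟨c, hc, δ, hδ, h⟩ := poly_max_finset N hfin.toFinset (by
    rwa [Set.Finite.toFinset_nonempty])
  exact ⟨c, (Set.Finite.mem_toFinset hfin).1 hc, δ, hδ,
    fun ε h0 h1 d hd => h ε h0 h1 d ((Set.Finite.mem_toFinset hfin).2 hd)⟩

lemma poly_min (N : ℕ) (D : Set (ℕ → ℝ)) (hfin : D.Finite) (hne : D.Nonempty) :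
    ∃ c ∈ D, ∃ δ > 0, ∀ ε, 0 ≤ ε → ε ≤ δ → ∀ d ∈ D, polyval N c ε ≤ polyval N d ε := by
  obtain ⟨c', hc', δ, hδ, h⟩ := poly_max N ((fun c k => -(c k)) '' D) (hfin.image _) (hne.image _)
  obtain ⟨c, hcD, rfl⟩ := hc'
  refine ⟨c, hcD, δ, hδ, fun ε h0 h1 d hd => ?_⟩
  have hle := h ε h0 h1 _ (Set.mem_image_of_mem _ hd)
  have hneg : ∀ e : ℕ → ℝ, polyval N (fun k => -(e k)) ε = - polyval N e ε := by
    intro e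
    unfold polyval
    rw [← Finset.sum_neg_distrib]
    exact Finset.sum_congr rfl fun i _ => by ring
  rw [hneg, hneg] at hle
  linarith

def lfun {n : ℕ} (c : Fin n → ℝ) : (Fin n → ℝ) →L[ℝ] ℝ :=
  ∑ i, c i • (ContinuousLinearMap.proj i : (Fin n → ℝ) →L[ℝ] ℝ)

lemma lfun_apply {n : ℕ} (c : Fin n → ℝ) (x : Fin n → ℝ) : lfun c x = ∑ i, x i * c i := by
  simp [lfun, ContinuousLinearMap.sum_apply, mul_comm]

def coeffs {n : ℕ} (ρ : Fin n → ℝ) (m : Fin n → ℝ) : ℕ → ℝ :=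
  fun k => Nat.casesOn k (∑ i, m i * ρ i) (fun j => if h : j < n then m ⟨j, h⟩ else 0)

lemma polyval_coeffs {n : ℕ} (ρ m : Fin n → ℝ) (ε : ℝ) :
    polyval (n+1) (coeffs ρ m) ε = ∑ i, m i * (ε ^ ((i:ℕ)+1) + ρ i) := by
  unfold polyval
  rw [Finset.sum_range_succ']
  have h0 : coeffs ρ m 0 * ε ^ 0 = ∑ i, m i * ρ i := by
    simp [coeffs]
  have h1 : ∀ i ∈ Finset.range n, coeffs ρ m (i+1) * ε ^ (i+1)
      = (if h : i < n then m ⟨i, h⟩ * ε ^ (i+1) else 0) := by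
    intro i hi
    rw [Finset.mem_range] at hi
    simp [coeffs, hi]
  rw [Finset.sum_congr rfl h1, h0,
    ← Fin.sum_univ_eq_sum_range (fun k => if h : k < n then m ⟨k, h⟩ * ε ^ (k+1) else 0) n]
  have h2 : ∀ i : Fin n, (if h : (i:ℕ) < n then m ⟨(i:ℕ), h⟩ * ε ^ ((i:ℕ)+1) else 0)
      = m i * ε ^ ((i:ℕ)+1) := by
    intro i
    rw [dif_pos i.isLt]
  rw [Finset.sum_congr rfl fun i _ => h2 i]
  rw [← Finset.sum_add_distrib]
  exact Finset.sum_congr rfl fun i _ => by ring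

end Aux15

/-- `m` is an invariant probability vector of the stochastic matrix `Q` (rows `Q i`). -/
def isInvProb {n : ℕ} (Q : Fin n → Fin n → ℝ) (m : Fin n → ℝ) : Prop :=
  (∀ i, 0 ≤ m i) ∧ (∑ i, m i) = 1 ∧ ∀ j, ∑ i, m i * Q i j = m j

section Aux15two
lemma exists_invProb {n : ℕ} (hn : 0 < n) (Q : Fin n → Fin n → ℝ)
    (h0 : ∀ i j, 0 ≤ Q i j) (h1 : ∀ i, ∑ j, Q i j = 1) :
    ∃ m, isInvProb Q m := by
  classical
  set L : (Fin n → ℝ) → (Fin n → ℝ) := fun x j => ∑ i, x i * Q i j with hL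
  have hLsimp : ∀ x ∈ stdSimplex ℝ (Fin n), L x ∈ stdSimplex ℝ (Fin n) := by
    intro x hx
    constructor
    · intro j
      exact Finset.sum_nonneg fun i _ => mul_nonneg (hx.1 i) (h0 i j)
    · rw [Finset.sum_comm]
      calc (∑ i, ∑ j, x i * Q i j) = ∑ i, x i * ∑ j, Q i j := by
            apply Finset.sum_congr rfl; intro i _; rw [Finset.mul_sum]
        _ = ∑ i, x i := by
            apply Finset.sum_congr rfl; intro i _; rw [h1 i, mul_one]
        _ = 1 := hx.2
  set e0 : Fin n → ℝ := fun j => if j = ⟨0, hn⟩ then 1 else 0 with he0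
  have he0s : e0 ∈ stdSimplex ℝ (Fin n) := by
    constructor
    · intro j; dsimp [e0]; split <;> norm_num
    · simp [e0]
  set μ : ℕ → (Fin n → ℝ) := fun k => L^[k] e0 with hμ
  have hμs : ∀ k, μ k ∈ stdSimplex ℝ (Fin n) := by
    intro k
    induction k with
    | zero => simpa [μ] using he0s
    | succ k ih =>
      have : μ (k+1) = L (μ k) := by
        simp only [μ, Function.iterate_succ_apply']
      rw [this]; exact hLsimp _ ih
  set x : ℕ → (Fin n → ℝ) := fun N j => ((N:ℝ)+1)⁻¹ * ∑ k ∈ Finset.range (N+1), μ k j with hx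
  have hxs : ∀ N, x N ∈ stdSimplex ℝ (Fin n) := by
    intro N
    constructor
    · intro j
      apply mul_nonneg (by positivity)
      exact Finset.sum_nonneg fun k _ => (hμs k).1 j
    · simp only [x]
      rw [← Finset.mul_sum, Finset.sum_comm]
      have : ∀ k ∈ Finset.range (N+1), (∑ j, μ k j) = 1 := fun k _ => (hμs k).2
      rw [Finset.sum_congr rfl this]
      simp
      field_simp
  -- key identity
  have hstep : ∀ k j, μ (k+1) j = ∑ i, μ k i * Q i j := by
    intro k j
    simp only [μ, Function.iterate_succ_apply', L]
  have hkey : ∀ N j, (∑ i, x N i * Q i j) = x N j + ((N:ℝ)+1)⁻¹ * (μ (N+1) j - μ 0 j) := by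
    intro N j
    have hterm : ∀ i : Fin n, x N i * Q i j
        = ((N:ℝ)+1)⁻¹ * ∑ k ∈ Finset.range (N+1), μ k i * Q i j := by
      intro i
      simp only [x]
      rw [mul_assoc, Finset.sum_mul]
    have hLx : (∑ i, x N i * Q i j)
        = ((N:ℝ)+1)⁻¹ * ∑ k ∈ Finset.range (N+1), μ (k+1) j := by
      rw [Finset.sum_congr rfl fun i _ => hterm i, ← Finset.mul_sum, Finset.sum_comm]
      congr 1
      exact Finset.sum_congr rfl fun k _ => (hstep k j).symm
    have h2 : ∑ k ∈ Finset.range (N+1), μ (k+1) j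
        = ∑ k ∈ Finset.range (N+1), μ k j + μ (N+1) j - μ 0 j := by
      have ha := Finset.sum_range_succ' (fun k => μ k j) (N+1)
      have hb := Finset.sum_range_succ (fun k => μ k j) (N+1)
      linarith
    rw [hLx, h2]
    simp only [x]
    ring
  obtain ⟨m, hm, φ, hφ, hconv⟩ := (isCompact_stdSimplex ℝ (Fin n)).tendsto_subseq hxs
  refine ⟨m, hm.1, hm.2, ?_⟩
  intro j
  have hcontL : Continuous fun y : Fin n → ℝ => ∑ i, y i * Q i j :=
    continuous_finset_sum _ fun i _ => (continuous_apply i).mul continuous_const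
  have h1 : Filter.Tendsto (fun N => ∑ i, (x (φ N)) i * Q i j) Filter.atTop
      (nhds (∑ i, m i * Q i j)) := by
    have := (hcontL.tendsto m).comp hconv
    exact this
  have h2 : Filter.Tendsto (fun N => x (φ N) j) Filter.atTop (nhds (m j)) := by
    have := ((continuous_apply j).tendsto m).comp hconv
    exact this
  have hφat : Filter.Tendsto (fun N => ((φ N : ℝ) + 1)) Filter.atTop Filter.atTop :=
    Filter.tendsto_atTop_add_const_right _ 1
      (tendsto_natCast_atTop_atTop.comp hφ.tendsto_atTop)
  have hinv : Filter.Tendsto (fun N => ((φ N : ℝ) + 1)⁻¹) Filter.atTop (nhds 0) :=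
    tendsto_inv_atTop_zero.comp hφat
  have h3 : Filter.Tendsto (fun N => ((φ N : ℝ)+1)⁻¹ * (μ (φ N + 1) j - μ 0 j))
      Filter.atTop (nhds 0) := by
    refine squeeze_zero_norm (a := fun N => 2 * ((φ N : ℝ)+1)⁻¹) ?_ ?_
    · intro N
      have hpos : (0:ℝ) < (φ N : ℝ) + 1 := by positivity
      have hb1 : ∀ k, 0 ≤ μ k j ∧ μ k j ≤ 1 := fun k => ⟨(hμs k).1 j, by
        calc μ k j ≤ ∑ i, μ k i :=
              Finset.single_le_sum (fun i _ => (hμs k).1 i) (Finset.mem_univ j)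
          _ = 1 := (hμs k).2⟩
      have hd1 := hb1 (φ N + 1)
      have hd0 := hb1 0
      rw [Real.norm_eq_abs, abs_mul, abs_inv, abs_of_pos hpos]
      have habs : |μ (φ N + 1) j - μ 0 j| ≤ 2 :=
        abs_le.2 ⟨by linarith [hd1.1, hd0.2], by linarith [hd1.2, hd0.1]⟩
      calc ((φ N : ℝ) + 1)⁻¹ * |μ (φ N + 1) j - μ 0 j|
          ≤ ((φ N : ℝ) + 1)⁻¹ * 2 := by
            apply mul_le_mul_of_nonneg_left habs (by positivity)
        _ = 2 * ((φ N : ℝ) + 1)⁻¹ := by ring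
    · simpa using hinv.const_mul (2:ℝ)

  have h4 : Filter.Tendsto
      (fun N => x (φ N) j + ((φ N : ℝ)+1)⁻¹ * (μ (φ N + 1) j - μ 0 j))
      Filter.atTop (nhds (m j + 0)) := h2.add h3
  have h1' : Filter.Tendsto
      (fun N => x (φ N) j + ((φ N : ℝ)+1)⁻¹ * (μ (φ N + 1) j - μ 0 j))
      Filter.atTop (nhds (∑ i, m i * Q i j)) := by
    have heq : (fun N => ∑ i, x (φ N) i * Q i j)
        = fun N => x (φ N) j + ((φ N : ℝ)+1)⁻¹ * (μ (φ N + 1) j - μ 0 j) :=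
      funext fun N => hkey (φ N) j
    rwa [heq] at h1
  have := tendsto_nhds_unique h1' h4
  rw [this, add_zero]

lemma isCompact_invProb {n : ℕ} (Q : Fin n → Fin n → ℝ) :
    IsCompact {m : Fin n → ℝ | isInvProb Q m} := by
  apply IsCompact.of_isClosed_subset (isCompact_stdSimplex ℝ (Fin n))
  · have heq : {m : Fin n → ℝ | isInvProb Q m} =
        (⋂ i, {m : Fin n → ℝ | 0 ≤ m i}) ∩
        ({m : Fin n → ℝ | ∑ i, m i = 1} ∩ ⋂ j, {m : Fin n → ℝ | ∑ i, m i * Q i j = m j}) := by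
      ext m
      simp only [Set.mem_setOf_eq, Set.mem_inter_iff, Set.mem_iInter, isInvProb]
    rw [heq]
    refine IsClosed.inter (isClosed_iInter fun i => ?_) (IsClosed.inter ?_ (isClosed_iInter fun j => ?_))
    · exact isClosed_le continuous_const (continuous_apply i)
    · exact isClosed_eq (continuous_finset_sum _ fun i _ => continuous_apply i) continuous_const
    · exact isClosed_eq (continuous_finset_sum _ fun i _ => (continuous_apply i).mul continuous_const)
        (continuous_apply j)
  · intro m hm
    exact ⟨hm.1, hm.2.1⟩

lemma exists_extreme_max {n : ℕ} {C : Set (Fin n → ℝ)} (hcomp : IsCompact C) (hne : C.Nonempty)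
    (l : (Fin n → ℝ) →L[ℝ] ℝ) : ∃ x ∈ C.extremePoints ℝ, ∀ z ∈ C, l z ≤ l x := by
  have h : IsExposed ℝ C {y ∈ C | ∀ z ∈ C, l z ≤ l y} := fun _ => ⟨l, rfl⟩
  obtain ⟨z, hz, hmax⟩ := hcomp.exists_isMaxOn hne l.continuous.continuousOn
  obtain ⟨x, hx⟩ := (h.isCompact hcomp).extremePoints_nonempty ⟨z, hz, fun w hw => hmax hw⟩
  exact ⟨x, h.isExtreme.extremePoints_subset_extremePoints hx, hx.1.2⟩

lemma finite_extremePoints_invProb {n : ℕ} (Q : Fin n → Fin n → ℝ) :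
    (({m : Fin n → ℝ | isInvProb Q m}).extremePoints ℝ).Finite := by
  classical
  set C := {m : Fin n → ℝ | isInvProb Q m} with hC
  apply Set.Finite.of_finite_image (f := fun m => {i | m i ≠ 0})
  · exact Set.toFinite _
  · intro m hm m' hm' hsupp
    simp only at hsupp
    by_contra hne
    have hmC : m ∈ C := hm.1
    have hm'C : m' ∈ C := hm'.1
    obtain ⟨hm0, hm1, hm2⟩ := hmC
    obtain ⟨hm'0, hm'1, hm'2⟩ := hm'C
    set d : Fin n → ℝ := fun i => m i - m' i with hd
    have hdne : ∃ i, d i ≠ 0 := by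
      by_contra hall
      push_neg at hall
      exact hne (funext fun i => by have := hall i; simp only [d] at this; linarith)
    have hsupp' : ∀ i, m i = 0 → m' i = 0 := by
      intro i hi
      by_contra hne'
      have : i ∈ {i | m' i ≠ 0} := hne'
      rw [← hsupp] at this
      exact this hi
    have hdpos : ∀ i, d i ≠ 0 → 0 < m i := by
      intro i hdi
      rcases lt_or_eq_of_le (hm0 i) with h | h
      · exact h
      · exfalso; apply hdi
        have h0 : m i = 0 := h.symm
        simp only [d, h0, hsupp' i h0, sub_zero]
    set s : Finset (Fin n) := Finset.univ.filter (fun i => d i ≠ 0) with hs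
    have hsne : s.Nonempty := by
      obtain ⟨i, hi⟩ := hdne
      exact ⟨i, by simp [s, hi]⟩
    set δ : ℝ := s.inf' hsne (fun i => m i / |d i|) with hδdef
    have hδpos : 0 < δ := by
      rw [hδdef, Finset.lt_inf'_iff]
      intro i hi
      have hdi : d i ≠ 0 := by simpa [s] using hi
      exact div_pos (hdpos i hdi) (abs_pos.2 hdi)
    have hδle : ∀ i, δ * |d i| ≤ m i := by
      intro i
      by_cases hdi : d i = 0
      · simp [hdi, hm0 i]
      · have hmem : i ∈ s := by simp [s, hdi]
        have h1 : δ ≤ m i / |d i| := Finset.inf'_le _ hmem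
        have h2 : 0 < |d i| := abs_pos.2 hdi
        calc δ * |d i| ≤ (m i / |d i|) * |d i| := mul_le_mul_of_nonneg_right h1 (le_of_lt h2)
          _ = m i := by field_simp
    set y : Fin n → ℝ := fun i => m i + δ * d i with hy
    set z : Fin n → ℝ := fun i => m i - δ * d i with hz
    have hyC : y ∈ C := by
      refine ⟨?_, ?_, ?_⟩
      · intro i
        have := hδle i
        have habs : δ * d i ≥ -(δ * |d i|) := by
          have : d i ≥ -|d i| := neg_abs_le _
          nlinarith [hδpos]
        simp only [y]
        linarith
      · simp only [y]
        rw [Finset.sum_add_distrib, hm1, ← Finset.mul_sum]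
        have : ∑ i, d i = 0 := by
          simp only [d, Finset.sum_sub_distrib, hm1, hm'1, sub_self]
        rw [this, mul_zero, add_zero]
      · intro j
        simp only [y]
        have : ∑ i, (m i + δ * d i) * Q i j
            = ∑ i, m i * Q i j + δ * (∑ i, m i * Q i j - ∑ i, m' i * Q i j) := by
          rw [← Finset.sum_sub_distrib, Finset.mul_sum, ← Finset.sum_add_distrib]
          apply Finset.sum_congr rfl
          intro i _
          simp only [d]
          ring
        rw [this, hm2 j, hm'2 j]
    have hzC : z ∈ C := by
      refine ⟨?_, ?_, ?_⟩
      · intro i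
        have := hδle i
        have habs : δ * d i ≤ δ * |d i| :=
          mul_le_mul_of_nonneg_left (le_abs_self _) (le_of_lt hδpos)
        simp only [z]
        linarith
      · simp only [z]
        rw [Finset.sum_sub_distrib, hm1, ← Finset.mul_sum]
        have : ∑ i, d i = 0 := by
          simp only [d, Finset.sum_sub_distrib, hm1, hm'1, sub_self]
        rw [this, mul_zero, sub_zero]
      · intro j
        simp only [z]
        have : ∑ i, (m i - δ * d i) * Q i j
            = ∑ i, m i * Q i j - δ * (∑ i, m i * Q i j - ∑ i, m' i * Q i j) := by
          rw [← Finset.sum_sub_distrib, Finset.mul_sum, ← Finset.sum_sub_distrib]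
          apply Finset.sum_congr rfl
          intro i _
          simp only [d]
          ring
        rw [this, hm2 j, hm'2 j]
    have hseg : m ∈ openSegment ℝ y z := by
      refine ⟨1/2, 1/2, by norm_num, by norm_num, by norm_num, ?_⟩
      funext i
      simp only [y, z, Pi.add_apply, Pi.smul_apply, smul_eq_mul]
      ring
    have := hm.2 hyC hzC hseg
    obtain ⟨i0, hi0⟩ := hdne
    have : y i0 = m i0 := congrFun this i0
    simp only [y] at this
    have : δ * d i0 = 0 := by linarith
    rcases mul_eq_zero.1 this with h | h
    · exact absurd h (ne_of_gt hδpos)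
    · exact hi0 h

end Aux15two

/-- along the perturbation curve `ε ↦ g_ε = (ε, …, εⁿ)`, for all `ε` small
enough, the upper mean payoff `𝜒̄(g_ε + T)`, given by the min–max formula, is attained by
a fixed pair of policies `(σ, τ)` and a fixed invariant probability vector `m`. -/
theorem stmt15 {n : ℕ} (hn : 0 < n)
    (A : Fin n → Type) [∀ i, Fintype (A i)] [∀ i, Nonempty (A i)]
    (B : ∀ i, A i → Type) [∀ i a, Fintype (B i a)] [∀ i a, Nonempty (B i a)]
    (r : ∀ i, ∀ a : A i, B i a → ℝ) (P : ∀ i, ∀ a : A i, B i a → Fin n → ℝ)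
    (hP : ∀ i a b, (∀ j, 0 ≤ P i a b j) ∧ ∑ j, P i a b j = 1)
    (T : (Fin n → ℝ) → (Fin n → ℝ)) (hT : T = shapleyOp A B r P) :
    ∃ (ε₁ : ℝ), 0 < ε₁ ∧
    ∃ (σ : ∀ i, A i) (τ : ∀ i, ∀ a : A i, B i a) (m : Fin n → ℝ),
      isInvProb (fun i j => P i (σ i) (τ i (σ i)) j) m ∧
      ∀ ε : ℝ, 0 ≤ ε → ε ≤ ε₁ →
        (⨅ σ' : ∀ i, A i, sSup {v : ℝ |
            ∃ (τ' : ∀ i, ∀ a : A i, B i a) (m' : Fin n → ℝ),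
              isInvProb (fun i j => P i (σ' i) (τ' i (σ' i)) j) m' ∧
              v = ∑ i, m' i * (ε ^ ((i : ℕ) + 1) + r i (σ' i) (τ' i (σ' i)))}) =
          ∑ i, m i * (ε ^ ((i : ℕ) + 1) + r i (σ i) (τ i (σ i))) := by
  classical
  clear hT
  have hNA : Nonempty (∀ i, A i) := ⟨fun i => Classical.arbitrary _⟩
  have hNB : Nonempty (∀ i, ∀ a : A i, B i a) := ⟨fun i a => Classical.arbitrary _⟩
  set C : (∀ i, A i) → (∀ i, ∀ a : A i, B i a) → Set (Fin n → ℝ) :=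
    fun σ' τ' => {m : Fin n → ℝ | isInvProb (fun i j => P i (σ' i) (τ' i (σ' i)) j) m}
    with hCdef
  have hCcomp : ∀ σ' τ', IsCompact (C σ' τ') := fun σ' τ' => isCompact_invProb _
  have hCne : ∀ σ' τ', (C σ' τ').Nonempty := fun σ' τ' =>
    exists_invProb hn _ (fun i j => (hP i _ _).1 j) (fun i => (hP i _ _).2)
  set ρ : (∀ i, A i) → (∀ i, ∀ a : A i, B i a) → Fin n → ℝ :=
    fun σ' τ' i => r i (σ' i) (τ' i (σ' i)) with hρdef
  set D : (∀ i, A i) → Set (ℕ → ℝ) :=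
    fun σ' => ⋃ τ' : (∀ i, ∀ a : A i, B i a),
      (fun m => coeffs (ρ σ' τ') m) '' ((C σ' τ').extremePoints ℝ) with hDdef
  have hDfin : ∀ σ', (D σ').Finite := fun σ' =>
    Set.finite_iUnion fun τ' => (finite_extremePoints_invProb _).image _
  have hDne : ∀ σ', (D σ').Nonempty := by
    intro σ'
    have τ' : ∀ i, ∀ a : A i, B i a := Classical.arbitrary _
    obtain ⟨x, hx⟩ := (hCcomp σ' τ').extremePoints_nonempty (hCne σ' τ')
    exact ⟨coeffs (ρ σ' τ') x, Set.mem_iUnion.2 ⟨τ', Set.mem_image_of_mem _ hx⟩⟩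
  have hsel : ∀ σ', ∃ c ∈ D σ', ∃ δ > 0, ∀ ε, 0 ≤ ε → ε ≤ δ →
      ∀ d ∈ D σ', polyval (n+1) d ε ≤ polyval (n+1) c ε :=
    fun σ' => poly_max (n+1) _ (hDfin σ') (hDne σ')
  choose c hcD δ hδpos hcdom using hsel
  have hunp : ∀ σ', ∃ τ' m', m' ∈ (C σ' τ').extremePoints ℝ ∧ c σ' = coeffs (ρ σ' τ') m' := by
    intro σ'
    obtain ⟨τ', hmem⟩ := Set.mem_iUnion.1 (hcD σ')
    obtain ⟨m', hm', hc⟩ := hmem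
    exact ⟨τ', m', hm', hc.symm⟩
  choose τc mc hmc hceq using hunp
  obtain ⟨cm, hcmD, δ', hδ'pos, hmdom⟩ :=
    poly_min (n+1) (Set.range c) (Set.finite_range c) (Set.range_nonempty c)
  obtain ⟨σ, hσ⟩ := hcmD
  obtain ⟨σ0, -, hσ0⟩ := Set.exists_min_image Set.univ δ Set.finite_univ
    ⟨Classical.arbitrary _, Set.mem_univ _⟩
  refine ⟨min δ' (δ σ0), lt_min hδ'pos (hδpos σ0), σ, τc σ, mc σ, ?_, ?_⟩
  · have h := extremePoints_subset (hmc σ)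
    exact h
  intro ε hε0 hε1
  have hεδ' : ε ≤ δ' := le_trans hε1 (min_le_left _ _)
  have hεδ : ∀ σ', ε ≤ δ σ' := fun σ' =>
    le_trans hε1 (le_trans (min_le_right _ _) (hσ0 σ' (Set.mem_univ _)))
  have hsup : ∀ σ' : ∀ i, A i,
      sSup {v : ℝ | ∃ (τ' : ∀ i, ∀ a : A i, B i a) (m' : Fin n → ℝ),
          isInvProb (fun i j => P i (σ' i) (τ' i (σ' i)) j) m' ∧
          v = ∑ i, m' i * (ε ^ ((i : ℕ) + 1) + r i (σ' i) (τ' i (σ' i)))}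
      = polyval (n+1) (c σ') ε := by
    intro σ'
    apply IsGreatest.csSup_eq
    constructor
    · have h := extremePoints_subset (hmc σ')
      refine ⟨τc σ', mc σ', h, ?_⟩
      rw [hceq σ', polyval_coeffs]
    · rintro v ⟨τ', m', hm', rfl⟩
      have hxex := exists_extreme_max (hCcomp σ' τ') (hCne σ' τ')
        (lfun (fun i => ε ^ ((i:ℕ)+1) + ρ σ' τ' i))
      obtain ⟨x, hxep, hxmax⟩ := hxex
      have h1 : ∑ i, m' i * (ε ^ ((i:ℕ)+1) + r i (σ' i) (τ' i (σ' i)))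
          = lfun (fun i => ε ^ ((i:ℕ)+1) + ρ σ' τ' i) m' := by
        rw [lfun_apply]
      have h2 : lfun (fun i => ε ^ ((i:ℕ)+1) + ρ σ' τ' i) x
          = polyval (n+1) (coeffs (ρ σ' τ') x) ε := by
        rw [lfun_apply, polyval_coeffs]
      have h3 : polyval (n+1) (coeffs (ρ σ' τ') x) ε ≤ polyval (n+1) (c σ') ε := by
        apply hcdom σ' ε hε0 (hεδ σ')
        exact Set.mem_iUnion.2 ⟨τ', Set.mem_image_of_mem _ hxep⟩
      rw [h1]
      exact le_trans (le_trans (hxmax m' hm') (le_of_eq h2)) h3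
  have hrhs : (∑ i, mc σ i * (ε ^ ((i:ℕ)+1) + r i (σ i) (τc σ i (σ i))))
      = polyval (n+1) (c σ) ε := by
    rw [hceq σ, polyval_coeffs]
  rw [hrhs]
  have hb : BddBelow (Set.range fun σ' : ∀ i, A i =>
      sSup {v : ℝ | ∃ (τ' : ∀ i, ∀ a : A i, B i a) (m' : Fin n → ℝ),
          isInvProb (fun i j => P i (σ' i) (τ' i (σ' i)) j) m' ∧
          v = ∑ i, m' i * (ε ^ ((i : ℕ) + 1) + r i (σ' i) (τ' i (σ' i)))}) :=
    Set.Finite.bddBelow (Set.finite_range _)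
  apply le_antisymm
  · have h1 := ciInf_le hb σ
    rwa [hsup σ] at h1
  · apply le_ciInf
    intro σ'
    rw [hsup σ']
    have := hmdom ε hε0 hεδ' (c σ') (Set.mem_range_self σ')
    rwa [← hσ] at this
end

section
/- Let T : ℝⁿ → ℝⁿ be a perfect-information finite Shapley operator admitting an invariant half-line: T(u + αν) = u + (α+1)ν for some u, ν ∈ ℝⁿ and all α ≥ α₀. Then there exist a policy σ* of player Min, a policy τ* of player Max, and α₁ ≥ α₀ such that for all α ≥ α₁: T(u + αν) = T^{σ*}(u + αν) = {}^{τ*}T(u + αν) = u + (α+1)ν. -/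
open Filter

lemma evMax {K : Type*} [Finite K] [Nonempty K] (c d : K → ℝ) :
    ∃ k : K, ∀ᶠ α in atTop, ∀ j : K, c j + d j * α ≤ c k + d k * α := by
  obtain ⟨k, hk⟩ := Finite.exists_max (fun j : K => (toLex (d j, c j) : Lex (ℝ × ℝ)))
  refine ⟨k, eventually_all.2 fun j => ?_⟩
  rcases Prod.Lex.toLex_le_toLex.1 (hk j) with h | ⟨h1, h2⟩
  · filter_upwards [eventually_ge_atTop ((c j - c k) / (d k - d j))] with α hα
    rw [div_le_iff₀ (by linarith)] at hα
    nlinarith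
  · filter_upwards with α
    simp only [Prod.fst, Prod.snd] at h1 h2; rw [h1]; linarith

lemma evMin {K : Type*} [Finite K] [Nonempty K] (c d : K → ℝ) :
    ∃ k : K, ∀ᶠ α in atTop, ∀ j : K, c k + d k * α ≤ c j + d j * α := by
  obtain ⟨k, hk⟩ := evMax (fun j => -c j) (fun j => -d j)
  refine ⟨k, hk.mono fun α h j => ?_⟩
  have := h j
  rw [neg_mul, neg_mul] at this
  linarith



/-- Dual reduced Shapley operator `{}^τT` of a policy `τ` of player Max. -/
noncomputable def dualReducedOp {n : ℕ} (A : Fin n → Type) [∀ i, Fintype (A i)]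
    [∀ i, Nonempty (A i)] (B : ∀ i, A i → Type)
    (r : ∀ i, ∀ a : A i, B i a → ℝ) (P : ∀ i, ∀ a : A i, B i a → Fin n → ℝ)
    (τ : ∀ i, ∀ a : A i, B i a) : (Fin n → ℝ) → (Fin n → ℝ) :=
  fun x i => ⨅ a : A i, (r i a (τ i a) + ∑ j, P i a (τ i a) j * x j)

/-- along an invariant half-line of `T`, the min and max in the
definition of `T` are ultimately attained by fixed policies `σ*` and `τ*`. -/
theorem stmt18 {n : ℕ} (hn : 0 < n)
    (A : Fin n → Type) [∀ i, Fintype (A i)] [∀ i, Nonempty (A i)]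
    (B : ∀ i, A i → Type) [∀ i a, Fintype (B i a)] [∀ i a, Nonempty (B i a)]
    (r : ∀ i, ∀ a : A i, B i a → ℝ) (P : ∀ i, ∀ a : A i, B i a → Fin n → ℝ)
    (hP : ∀ i a b, (∀ j, 0 ≤ P i a b j) ∧ ∑ j, P i a b j = 1)
    (T : (Fin n → ℝ) → (Fin n → ℝ)) (hT : T = shapleyOp A B r P)
    (u ν : Fin n → ℝ) (α₀ : ℝ)
    (hhalf : ∀ α ≥ α₀, T (u + α • ν) = u + (α + 1) • ν) :
    ∃ (σstar : ∀ i, A i) (τstar : ∀ i, ∀ a : A i, B i a) (α₁ : ℝ),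
      α₀ ≤ α₁ ∧ ∀ α ≥ α₁,
        T (u + α • ν) = reducedOp A B r P σstar (u + α • ν) ∧
        T (u + α • ν) = dualReducedOp A B r P τstar (u + α • ν) ∧
        T (u + α • ν) = u + (α + 1) • ν := by
  set c : ∀ i, ∀ a : A i, B i a → ℝ := fun i a b => r i a b + ∑ j, P i a b j * u j with hc
  set d : ∀ i, ∀ a : A i, B i a → ℝ := fun i a b => ∑ j, P i a b j * ν j with hd
  have key : ∀ (i : Fin n) (a : A i) (b : B i a) (α : ℝ),
      r i a b + ∑ j, P i a b j * (u + α • ν) j = c i a b + d i a b * α := by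
    intro i a b α
    simp only [hc, hd, Pi.add_apply, Pi.smul_apply, smul_eq_mul, mul_add,
      Finset.sum_add_distrib, Finset.sum_mul]
    rw [show (∑ j, P i a b j * (α * ν j)) = ∑ j, P i a b j * ν j * α from
      Finset.sum_congr rfl fun j _ => by ring]
    ring
  have h1 : ∀ (i : Fin n) (a : A i), ∃ b : B i a, ∀ᶠ α in atTop, ∀ b' : B i a,
      c i a b' + d i a b' * α ≤ c i a b + d i a b * α := fun i a => evMax _ _
  choose τstar hτ using h1
  have h2 : ∀ i : Fin n, ∃ a : A i, ∀ᶠ α in atTop, ∀ a' : A i,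
      c i a (τstar i a) + d i a (τstar i a) * α
        ≤ c i a' (τstar i a') + d i a' (τstar i a') * α :=
    fun i => evMin (fun a => c i a (τstar i a)) (fun a => d i a (τstar i a))
  choose σstar hσ using h2
  have hev : ∀ᶠ α in atTop,
      (∀ i, ∀ a : A i, ∀ b' : B i a,
        c i a b' + d i a b' * α ≤ c i a (τstar i a) + d i a (τstar i a) * α) ∧
      (∀ i, ∀ a' : A i, c i (σstar i) (τstar i (σstar i)) + d i (σstar i) (τstar i (σstar i)) * α
        ≤ c i a' (τstar i a') + d i a' (τstar i a') * α) := by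
    refine Eventually.and ?_ ?_
    · exact eventually_all.2 fun i => eventually_all.2 fun a => hτ i a
    · exact eventually_all.2 fun i => hσ i
  rw [eventually_atTop] at hev
  obtain ⟨a₁, ha₁⟩ := hev
  refine ⟨σstar, τstar, max α₀ a₁, le_max_left _ _, fun α hα => ?_⟩
  obtain ⟨H1, H2⟩ := ha₁ α (le_trans (le_max_right _ _) hα)
  have hα₀ : α₀ ≤ α := le_trans (le_max_left _ _) hα
  set x := u + α • ν with hx
  have hsup : ∀ (i : Fin n) (a : A i),
      (⨆ b : B i a, (r i a b + ∑ j, P i a b j * x j))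
        = c i a (τstar i a) + d i a (τstar i a) * α := by
    intro i a
    refine le_antisymm (ciSup_le fun b => by rw [key]; exact H1 i a b) ?_
    rw [← key i a (τstar i a) α]
    exact le_ciSup (f := fun b : B i a => r i a b + ∑ j, P i a b j * x j)
      (Set.Finite.bddAbove (Set.finite_range _)) (τstar i a)
  have hinf : ∀ i : Fin n, (⨅ a : A i, (c i a (τstar i a) + d i a (τstar i a) * α))
      = c i (σstar i) (τstar i (σstar i)) + d i (σstar i) (τstar i (σstar i)) * α := by
    intro i
    exact le_antisymm (ciInf_le (f := fun a : A i => c i a (τstar i a) + d i a (τstar i a) * α)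
      (Set.Finite.bddBelow (Set.finite_range _)) (σstar i))
      (le_ciInf (H2 i))
  have hTx : ∀ i : Fin n, T x i
      = c i (σstar i) (τstar i (σstar i)) + d i (σstar i) (τstar i (σstar i)) * α := by
    intro i
    rw [hT]
    show (⨅ a : A i, ⨆ b : B i a, (r i a b + ∑ j, P i a b j * x j)) = _
    rw [iInf_congr (hsup i), hinf i]
  refine ⟨?_, ?_, hhalf α hα₀⟩
  · funext i
    rw [hTx i]
    show _ = ⨆ b : B i (σstar i), (r i (σstar i) b + ∑ j, P i (σstar i) b j * x j)
    rw [hsup i (σstar i)]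
  · funext i
    rw [hTx i]
    show _ = ⨅ a : A i, (r i a (τstar i a) + ∑ j, P i a (τstar i a) j * x j)
    rw [iInf_congr (fun a => key i a (τstar i a) α), hinf i]
end
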